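/- If (M,𝔛) ⊨ RCA₀ and there is a definable ultrafilter U on P_𝔛, then (M,𝔛) ⊨ ACA₀. -/

import Mathlib

namespace Paper

/-! ### Syntax of (second-order) arithmetic.

Terms of the language `L_A = {0, 1, +, ·, <}`, with number variables indexed by `ℕ`.
Formulas also allow atomic formulas `t ∈ X_k` (membership in a set variable) and
set quantifiers `allS`; first-order formulas are those avoiding both. -/

inductive PTerm where
  | var : ℕ → PTerm
  | zero : PTerm
  | one : PTerm
  | add : PTerm → PTerm → PTerm
  | mul : PTerm → PTerm → PTerm

inductive Fml where
  | eq : PTerm → PTerm → Fml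
  | lt : PTerm → PTerm → Fml
  | mem : PTerm → ℕ → Fml
  | not : Fml → Fml
  | imp : Fml → Fml → Fml
  | all : ℕ → Fml → Fml
  | allS : ℕ → Fml → Fml

def Fml.and (φ ψ : Fml) : Fml := .not (.imp φ (.not ψ))
def Fml.or (φ ψ : Fml) : Fml := .imp (.not φ) ψ
def Fml.iff (φ ψ : Fml) : Fml := (Fml.imp φ ψ).and (Fml.imp ψ φ)
def Fml.ex (x : ℕ) (φ : Fml) : Fml := .not (.all x (.not φ))
def Fml.exS (k : ℕ) (φ : Fml) : Fml := .not (.allS k (.not φ))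

/-- A structure for the language `{0, 1, +, ·, <}` on a carrier `M`
(bundled, so that several structures can live on the same carrier). -/
structure AStr (M : Type) where
  zero : M
  one : M
  add : M → M → M
  mul : M → M → M
  lt : M → M → Prop

/-- The standard model of arithmetic. -/
def natStr : AStr ℕ := ⟨0, 1, (· + ·), (· * ·), (· < ·)⟩

namespace PTerm

def vars : PTerm → Finset ℕ
  | var n => {n}
  | zero => ∅
  | one => ∅
  | add t u => t.vars ∪ u.vars
  | mul t u => t.vars ∪ u.vars

/-- Substitution of a term `r` for the variable `x` (used only with `r` closed or
with `vars r ⊆ {x}`, in which case it is capture-free). -/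
def subst (x : ℕ) (r : PTerm) : PTerm → PTerm
  | var n => if n = x then r else var n
  | zero => zero
  | one => one
  | add t u => add (subst x r t) (subst x r u)
  | mul t u => mul (subst x r t) (subst x r u)

def val {M : Type} (S : AStr M) (v : ℕ → M) : PTerm → M
  | var n => v n
  | zero => S.zero
  | one => S.one
  | add t u => S.add (t.val S v) (u.val S v)
  | mul t u => S.mul (t.val S v) (u.val S v)

end PTerm

namespace Fml

/-- Free number variables. -/
def freeN : Fml → Finset ℕ
  | eq t u => t.vars ∪ u.vars
  | lt t u => t.vars ∪ u.vars
  | mem t _ => t.vars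
  | not φ => φ.freeN
  | imp φ ψ => φ.freeN ∪ ψ.freeN
  | all x φ => φ.freeN.erase x
  | allS _ φ => φ.freeN

/-- Substitution of a term `r` for the (free) variable `x`. -/
def substN (x : ℕ) (r : PTerm) : Fml → Fml
  | eq t u => eq (PTerm.subst x r t) (PTerm.subst x r u)
  | lt t u => lt (PTerm.subst x r t) (PTerm.subst x r u)
  | mem t k => mem (PTerm.subst x r t) k
  | not φ => not (substN x r φ)
  | imp φ ψ => imp (substN x r φ) (substN x r ψ)
  | all y φ => if y = x then all y φ else all y (substN x r φ)
  | allS k φ => allS k (substN x r φ)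

/-- First-order formulas: no set variables, no set quantifiers. -/
def IsFO : Fml → Prop
  | eq _ _ => True
  | lt _ _ => True
  | mem _ _ => False
  | not φ => φ.IsFO
  | imp φ ψ => φ.IsFO ∧ ψ.IsFO
  | all _ φ => φ.IsFO
  | allS _ _ => False

/-- Arithmetical formulas: set variables allowed as parameters, but no set quantifiers. -/
def IsArith : Fml → Prop
  | eq _ _ => True
  | lt _ _ => True
  | mem _ _ => True
  | not φ => φ.IsArith
  | imp φ ψ => φ.IsArith ∧ ψ.IsArith
  | all _ φ => φ.IsArith
  | allS _ _ => False

end Fml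

/-! ### Satisfaction -/

/-- Satisfaction for a second-order structure `(M, 𝔛)`: number quantifiers range over `M`,
set quantifiers range over `𝔛`. -/
def Sat {M : Type} (S : AStr M) (𝔛 : Set (Set M)) : (ℕ → M) → (ℕ → Set M) → Fml → Prop
  | v, _, .eq t u => t.val S v = u.val S v
  | v, _, .lt t u => S.lt (t.val S v) (u.val S v)
  | v, w, .mem t k => t.val S v ∈ w k
  | v, w, .not φ => ¬ Sat S 𝔛 v w φ
  | v, w, .imp φ ψ => Sat S 𝔛 v w φ → Sat S 𝔛 v w ψ
  | v, w, .all x φ => ∀ a : M, Sat S 𝔛 (Function.update v x a) w φ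
  | v, w, .allS k φ => ∀ X ∈ 𝔛, Sat S 𝔛 v (Function.update w k X) φ

/-- First-order satisfaction. -/
def SatFO {M : Type} (S : AStr M) (v : ℕ → M) (φ : Fml) : Prop :=
  Sat S Set.univ v (fun _ => ∅) φ

/-- `M ⊨ T` for a first-order theory `T`. -/
def ModelsT {M : Type} (S : AStr M) (T : Set Fml) : Prop :=
  ∀ φ ∈ T, ∀ v, SatFO S v φ

/-- Semantic consequence (equivalently, by the completeness theorem, provability). -/
def Proves (T : Set Fml) (φ : Fml) : Prop :=
  ∀ (M : Type) (S : AStr M), ModelsT S T → ∀ v, SatFO S v φ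

/-- Consistency (equivalently, by the completeness theorem, having a model). -/
def ConsistentT (T : Set Fml) : Prop :=
  ∃ (M : Type) (S : AStr M), ModelsT S T

def IsFOSentence (φ : Fml) : Prop := φ.IsFO ∧ φ.freeN = ∅

/-- Completeness of a theory. -/
def CompleteT (T : Set Fml) : Prop :=
  ∀ φ, IsFOSentence φ → (Proves T φ ∨ Proves T φ.not)

/-! ### Peano arithmetic -/

def numeral : ℕ → PTerm
  | 0 => .zero
  | n + 1 => .add (numeral n) .one

def univClosure (φ : Fml) : Fml := (φ.freeN.sort (· ≤ ·)).foldr Fml.all φ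

/-- The induction axiom for `φ` in the variable `x` (before taking universal closure). -/
def indFml (φ : Fml) (x : ℕ) : Fml :=
  .imp ((φ.substN x .zero).and (.all x (.imp φ (φ.substN x (.add (.var x) .one)))))
    (.all x φ)

/-- The axioms of first-order Peano arithmetic `PA`. -/
def PAax : Set Fml :=
  {Fml.all 0 (.not (.eq (.add (.var 0) .one) .zero)),
   Fml.all 0 (.all 1 (.imp (.eq (.add (.var 0) .one) (.add (.var 1) .one))
     (.eq (.var 0) (.var 1)))),
   Fml.all 0 (.eq (.add (.var 0) .zero) (.var 0)),
   Fml.all 0 (.all 1 (.eq (.add (.var 0) (.add (.var 1) .one))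
     (.add (.add (.var 0) (.var 1)) .one))),
   Fml.all 0 (.eq (.mul (.var 0) .zero) .zero),
   Fml.all 0 (.all 1 (.eq (.mul (.var 0) (.add (.var 1) .one))
     (.add (.mul (.var 0) (.var 1)) (.var 0)))),
   Fml.all 0 (.all 1 (Fml.iff (.lt (.var 0) (.var 1))
     (Fml.ex 2 (.eq (.add (.var 0) (.add (.var 2) .one)) (.var 1)))))} ∪
  {ψ | ∃ φ x, Fml.IsFO φ ∧ ψ = univClosure (indFml φ x)}

/-! ### Gödel coding -/

/-- The Cantor pairing function (the canonical pairing `⟨·,·⟩`). -/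
def cpair (a b : ℕ) : ℕ := (a + b) * (a + b + 1) / 2 + a

def PTerm.code : PTerm → ℕ
  | .var n => cpair 0 n
  | .zero => cpair 1 0
  | .one => cpair 2 0
  | .add t u => cpair 3 (cpair t.code u.code)
  | .mul t u => cpair 4 (cpair t.code u.code)

def Fml.code : Fml → ℕ
  | .eq t u => cpair 5 (cpair t.code u.code)
  | .lt t u => cpair 6 (cpair t.code u.code)
  | .not φ => cpair 7 φ.code
  | .imp φ ψ => cpair 8 (cpair φ.code ψ.code)
  | .all x φ => cpair 9 (cpair x φ.code)
  | .mem t k => cpair 10 (cpair t.code k)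
  | .allS k φ => cpair 11 (cpair k φ.code)

/-- A theory identified with its set of Gödel codes. -/
def theoryCode (T : Set Fml) : Set ℕ := Fml.code '' T

/-! ### The arithmetical hierarchy (syntactic classes) -/

inductive IsDelta0 : Fml → Prop
  | eq (t u) : IsDelta0 (.eq t u)
  | lt (t u) : IsDelta0 (.lt t u)
  | mem (t k) : IsDelta0 (.mem t k)
  | not {φ} : IsDelta0 φ → IsDelta0 φ.not
  | imp {φ ψ} : IsDelta0 φ → IsDelta0 ψ → IsDelta0 (φ.imp ψ)
  | ball {φ} (x t) : x ∉ PTerm.vars t → IsDelta0 φ →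
      IsDelta0 (.all x (.imp (.lt (.var x) t) φ))

def IsSigma01 (φ : Fml) : Prop := ∃ x ψ, IsDelta0 ψ ∧ φ = Fml.ex x ψ

def IsPi01 (φ : Fml) : Prop := ∃ x ψ, IsDelta0 ψ ∧ φ = Fml.all x ψ

/-! ### Subsystems of second-order arithmetic, semantically -/

/-- The basic axioms (`PA⁻`, a discretely ordered commutative semiring). -/
def PAminusSem {M : Type} (S : AStr M) : Prop :=
  (∀ a b c : M, S.add a (S.add b c) = S.add (S.add a b) c) ∧
  (∀ a b : M, S.add a b = S.add b a) ∧
  (∀ a b c : M, S.mul a (S.mul b c) = S.mul (S.mul a b) c) ∧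
  (∀ a b : M, S.mul a b = S.mul b a) ∧
  (∀ a b c : M, S.mul a (S.add b c) = S.add (S.mul a b) (S.mul a c)) ∧
  (∀ a : M, S.add a S.zero = a) ∧
  (∀ a : M, S.mul a S.zero = S.zero) ∧
  (∀ a : M, S.mul a S.one = a) ∧
  (∀ a b c : M, S.lt a b → S.lt b c → S.lt a c) ∧
  (∀ a : M, ¬ S.lt a a) ∧
  (∀ a b : M, S.lt a b ∨ a = b ∨ S.lt b a) ∧
  (∀ a b c : M, S.lt a b → S.lt (S.add a c) (S.add b c)) ∧
  (∀ a b c : M, S.lt S.zero c → S.lt a b → S.lt (S.mul a c) (S.mul b c)) ∧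
  (∀ a b : M, S.lt a b → ∃ c : M, S.add a c = b) ∧
  S.lt S.zero S.one ∧
  (∀ a : M, S.lt S.zero a → a = S.one ∨ S.lt S.one a) ∧
  (∀ a : M, a = S.zero ∨ S.lt S.zero a)

/-- `(M,𝔛)` satisfies the induction axiom for `φ` in the variable `x`
(with arbitrary number and set parameters). -/
def SatInd {M : Type} (S : AStr M) (𝔛 : Set (Set M)) (φ : Fml) (x : ℕ) : Prop :=
  ∀ (v : ℕ → M) (w : ℕ → Set M), (∀ k, w k ∈ 𝔛) →
    (Sat S 𝔛 (Function.update v x S.zero) w φ ∧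
      ∀ a, Sat S 𝔛 (Function.update v x a) w φ →
        Sat S 𝔛 (Function.update v x (S.add a S.one)) w φ) →
    ∀ a, Sat S 𝔛 (Function.update v x a) w φ

/-- `(M,𝔛) ⊨ RCA₀`: basic axioms, `Σ⁰₁` induction and `Δ⁰₁` comprehension. -/
def SatRCA0 {M : Type} (S : AStr M) (𝔛 : Set (Set M)) : Prop :=
  PAminusSem S ∧
  (∀ φ x, IsSigma01 φ → SatInd S 𝔛 φ x) ∧
  (∀ φ ψ x, IsSigma01 φ → IsPi01 ψ →
    ∀ (v : ℕ → M) (w : ℕ → Set M), (∀ k, w k ∈ 𝔛) →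
      (∀ a, Sat S 𝔛 (Function.update v x a) w φ ↔ Sat S 𝔛 (Function.update v x a) w ψ) →
      {a : M | Sat S 𝔛 (Function.update v x a) w φ} ∈ 𝔛)

/-- `(M,𝔛) ⊨ ACA₀`: basic axioms, the induction axiom and arithmetical comprehension. -/
def SatACA0 {M : Type} (S : AStr M) (𝔛 : Set (Set M)) : Prop :=
  PAminusSem S ∧
  (∀ X ∈ 𝔛, S.zero ∈ X → (∀ a, a ∈ X → S.add a S.one ∈ X) → ∀ a, a ∈ X) ∧
  (∀ φ x, Fml.IsArith φ → ∀ (v : ℕ → M) (w : ℕ → Set M), (∀ k, w k ∈ 𝔛) →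
    {a : M | Sat S 𝔛 (Function.update v x a) w φ} ∈ 𝔛)

/-! ### Arithmetization inside a model

All notions below unfold the standard (`Δ₀`/`Σ₁`) arithmetized definitions at the
meta-level, using the operations of a structure `S : AStr M`.  On models of `IΣ₁`
they agree with satisfaction of the corresponding arithmetic formulas. -/

namespace AStr

variable {M : Type} (S : AStr M)

/-- Interpretation of numerals. -/
def num : ℕ → M
  | 0 => S.zero
  | n + 1 => S.add (num n) S.one

def le (a b : M) : Prop := S.lt a b ∨ a = b

def two : M := S.add S.one S.one

/-- `p = ⟨a,b⟩` for the Cantor pairing function: `2p = (a+b)(a+b+1) + 2a`. -/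
def PairRel (p a b : M) : Prop :=
  S.mul S.two p = S.add (S.mul (S.add a b) (S.add (S.add a b) S.one)) (S.mul S.two a)

/-- `r = a mod m`. -/
def ModRel (a m r : M) : Prop := S.lt r m ∧ ∃ q, a = S.add (S.mul q m) r

/-- Gödel's β-function: `x = β(c, i)` where `c = ⟨a,b⟩` and `x = a mod (1 + (i+1)b)`. -/
def BetaRel (c i x : M) : Prop :=
  ∃ a b, S.PairRel c a b ∧ S.ModRel a (S.add S.one (S.mul (S.add i S.one) b)) x

/-- `s` codes a sequence of length `l` (as `s = ⟨c, l⟩`). -/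
def SeqLen (s l : M) : Prop := ∃ c, S.PairRel s c l

/-- The `i`-th entry of the sequence coded by `s` is `x`. -/
def SeqAt (s i x : M) : Prop := ∃ c l, S.PairRel s c l ∧ S.lt i l ∧ S.BetaRel c i x

/-- The fixed `Δ₀` coding formula `x ∈ y` for (bounded) sets:
`y = ⟨a,b⟩` and `a mod (1 + (x+1)b) = 1` with modulus `> 1`, and `x < y`. -/
def MemRel (x y : M) : Prop :=
  S.lt x y ∧ ∃ a b, S.PairRel y a b ∧
    S.lt S.one (S.add S.one (S.mul (S.add x S.one) b)) ∧
    S.ModRel a (S.add S.one (S.mul (S.add x S.one) b)) S.one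

/-- Tagged pairs, used for codes of syntax: `x = ⟨tag, payload⟩`. -/
def Node (x tag payload : M) : Prop := S.PairRel x tag payload

/-- `x` is the code of the variable `v`. -/
def VarC (v x : M) : Prop := S.Node x (S.num 0) v

def AddC (t u y : M) : Prop := ∃ p, S.PairRel p t u ∧ S.Node y (S.num 3) p
def MulC (t u y : M) : Prop := ∃ p, S.PairRel p t u ∧ S.Node y (S.num 4) p
def EqC (t u y : M) : Prop := ∃ p, S.PairRel p t u ∧ S.Node y (S.num 5) p
def LtC (t u y : M) : Prop := ∃ p, S.PairRel p t u ∧ S.Node y (S.num 6) p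
def NotC (x y : M) : Prop := S.Node y (S.num 7) x
def ImpC (x y z : M) : Prop := ∃ p, S.PairRel p x y ∧ S.Node z (S.num 8) p
def AllC (v x y : M) : Prop := ∃ p, S.PairRel p v x ∧ S.Node y (S.num 9) p

/-- `s` codes a construction sequence for terms. -/
def IsTermConSeq (s : M) : Prop :=
  ∀ i x, S.SeqAt s i x →
    (∃ v, S.VarC v x) ∨ S.Node x (S.num 1) (S.num 0) ∨ S.Node x (S.num 2) (S.num 0) ∨
    (∃ j k y z, S.lt j i ∧ S.lt k i ∧ S.SeqAt s j y ∧ S.SeqAt s k z ∧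
      (S.AddC y z x ∨ S.MulC y z x))

/-- `x` is a term code (in the sense of `M`, possibly nonstandard). -/
def TermCodeM (x : M) : Prop := ∃ s i, S.IsTermConSeq s ∧ S.SeqAt s i x

/-- `s` codes a construction sequence for (first-order) formulas. -/
def IsFmlConSeq (s : M) : Prop :=
  ∀ i x, S.SeqAt s i x →
    (∃ t u, S.TermCodeM t ∧ S.TermCodeM u ∧ (S.EqC t u x ∨ S.LtC t u x)) ∨
    (∃ j y, S.lt j i ∧ S.SeqAt s j y ∧ S.NotC y x) ∨
    (∃ j k y z, S.lt j i ∧ S.lt k i ∧ S.SeqAt s j y ∧ S.SeqAt s k z ∧ S.ImpC y z x) ∨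
    (∃ j v y, S.lt j i ∧ S.SeqAt s j y ∧ S.AllC v y x)

/-- `x` is a formula code (in the sense of `M`, possibly nonstandard). -/
def FmlCodeM (x : M) : Prop := ∃ s i, S.IsFmlConSeq s ∧ S.SeqAt s i x

/-- Construction sequences of pairs (term code, occurrence flag for the variable `v`). -/
def IsOccConSeq (v s : M) : Prop :=
  ∀ i p, S.SeqAt s i p → ∃ x f, S.PairRel p x f ∧
    ((S.VarC v x ∧ f = S.num 1) ∨
     (∃ u, S.VarC u x ∧ u ≠ v ∧ f = S.num 0) ∨
     ((S.Node x (S.num 1) (S.num 0) ∨ S.Node x (S.num 2) (S.num 0)) ∧ f = S.num 0) ∨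
     (∃ j k y z g h pj pk, S.lt j i ∧ S.lt k i ∧ S.SeqAt s j pj ∧ S.SeqAt s k pk ∧
       S.PairRel pj y g ∧ S.PairRel pk z h ∧ (S.AddC y z x ∨ S.MulC y z x) ∧
       ((f = S.num 1 ∧ (g = S.num 1 ∨ h = S.num 1)) ∨
        (f = S.num 0 ∧ g = S.num 0 ∧ h = S.num 0))))

/-- `f = 1` iff the variable `v` occurs in the term coded by `t` (`f ∈ {0,1}`). -/
def OccT (v t f : M) : Prop :=
  ∃ s i p, S.IsOccConSeq v s ∧ S.SeqAt s i p ∧ S.PairRel p t f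

/-- Construction sequences of pairs (formula code, freeness flag for the variable `v`). -/
def IsFreeConSeq (v s : M) : Prop :=
  ∀ i p, S.SeqAt s i p → ∃ x f, S.PairRel p x f ∧
    ((∃ t u, (S.EqC t u x ∨ S.LtC t u x) ∧
       ((f = S.num 1 ∧ (S.OccT v t (S.num 1) ∨ S.OccT v u (S.num 1))) ∨
        (f = S.num 0 ∧ S.OccT v t (S.num 0) ∧ S.OccT v u (S.num 0)))) ∨
     (∃ j y g pj, S.lt j i ∧ S.SeqAt s j pj ∧ S.PairRel pj y g ∧ S.NotC y x ∧ f = g) ∨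
     (∃ j k y z g h pj pk, S.lt j i ∧ S.lt k i ∧ S.SeqAt s j pj ∧ S.SeqAt s k pk ∧
       S.PairRel pj y g ∧ S.PairRel pk z h ∧ S.ImpC y z x ∧
       ((f = S.num 1 ∧ (g = S.num 1 ∨ h = S.num 1)) ∨
        (f = S.num 0 ∧ g = S.num 0 ∧ h = S.num 0))) ∨
     (∃ j w y g pj, S.lt j i ∧ S.SeqAt s j pj ∧ S.PairRel pj y g ∧ S.AllC w y x ∧
       ((w = v ∧ f = S.num 0) ∨ (w ≠ v ∧ f = g))))

/-- `f = 1` iff the variable `v` is free in the formula coded by `φ`. -/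
def FreeF (v φ f : M) : Prop :=
  ∃ s i p, S.IsFreeConSeq v s ∧ S.SeqAt s i p ∧ S.PairRel p φ f

/-- Construction sequences of pairs (term code, result of substituting `t` for `v`). -/
def IsSubTConSeq (v t s : M) : Prop :=
  ∀ i p, S.SeqAt s i p → ∃ x x', S.PairRel p x x' ∧
    ((S.VarC v x ∧ x' = t) ∨
     (∃ u, S.VarC u x ∧ u ≠ v ∧ x' = x) ∨
     ((S.Node x (S.num 1) (S.num 0) ∨ S.Node x (S.num 2) (S.num 0)) ∧ x' = x) ∨
     (∃ j k y z y' z' pj pk, S.lt j i ∧ S.lt k i ∧ S.SeqAt s j pj ∧ S.SeqAt s k pk ∧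
       S.PairRel pj y y' ∧ S.PairRel pk z z' ∧
       ((S.AddC y z x ∧ S.AddC y' z' x') ∨ (S.MulC y z x ∧ S.MulC y' z' x'))))

/-- Substitution of the term (code) `t` for the variable `v` in terms: `x' = x[t/v]`. -/
def SubT (v t x x' : M) : Prop :=
  ∃ s i p, S.IsSubTConSeq v t s ∧ S.SeqAt s i p ∧ S.PairRel p x x'

/-- Construction sequences for capture-free substitution in formulas. -/
def IsSubFConSeq (v t s : M) : Prop :=
  ∀ i p, S.SeqAt s i p → ∃ x x', S.PairRel p x x' ∧
    ((∃ a b a' b', S.SubT v t a a' ∧ S.SubT v t b b' ∧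
       ((S.EqC a b x ∧ S.EqC a' b' x') ∨ (S.LtC a b x ∧ S.LtC a' b' x'))) ∨
     (∃ j y y' pj, S.lt j i ∧ S.SeqAt s j pj ∧ S.PairRel pj y y' ∧
       S.NotC y x ∧ S.NotC y' x') ∨
     (∃ j k y z y' z' pj pk, S.lt j i ∧ S.lt k i ∧ S.SeqAt s j pj ∧ S.SeqAt s k pk ∧
       S.PairRel pj y y' ∧ S.PairRel pk z z' ∧ S.ImpC y z x ∧ S.ImpC y' z' x') ∨
     (∃ w y, S.AllC w y x ∧
       ((w = v ∧ x' = x) ∨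
        (w ≠ v ∧ (S.OccT w t (S.num 0) ∨ S.FreeF v y (S.num 0)) ∧
          ∃ j y' pj, S.lt j i ∧ S.SeqAt s j pj ∧ S.PairRel pj y y' ∧ S.AllC w y' x'))))

/-- Capture-free substitution in formulas: `x' = x[t/v]`, with `t` substitutable for `v`. -/
def SubF (v t x x' : M) : Prop :=
  ∃ s i p, S.IsSubFConSeq v t s ∧ S.SeqAt s i p ∧ S.PairRel p x x'

/-- `x` is (the code of) a generalization `∀v₁ ⋯ ∀vₖ y` of `y`. -/
def GenOf (y x : M) : Prop :=
  ∃ s i, S.SeqAt s (S.num 0) y ∧ S.SeqAt s i x ∧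
    ∀ j z z', S.SeqAt s j z → S.SeqAt s (S.add j S.one) z' → S.le (S.add j S.one) i →
      ∃ v, S.AllC v z z'

/-- Codes of instances of the logical axiom schemes (a Hilbert-style calculus with
modus ponens as the only rule; axioms are taken together with their generalizations). -/
def LogAxCore (x : M) : Prop :=
  -- A1 : a → (b → a)
  (∃ a b y, S.FmlCodeM a ∧ S.FmlCodeM b ∧ S.ImpC b a y ∧ S.ImpC a y x) ∨
  -- A2 : (a → (b → c)) → ((a → b) → (a → c))
  (∃ a b c bc abc ab ac r, S.FmlCodeM a ∧ S.FmlCodeM b ∧ S.FmlCodeM c ∧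
    S.ImpC b c bc ∧ S.ImpC a bc abc ∧ S.ImpC a b ab ∧ S.ImpC a c ac ∧
    S.ImpC ab ac r ∧ S.ImpC abc r x) ∨
  -- A3 : (¬b → ¬a) → (a → b)
  (∃ a b na nb l r, S.FmlCodeM a ∧ S.FmlCodeM b ∧ S.NotC a na ∧ S.NotC b nb ∧
    S.ImpC nb na l ∧ S.ImpC a b r ∧ S.ImpC l r x) ∨
  -- A4 : ∀v a → a[t/v]
  (∃ v t a a' al, S.TermCodeM t ∧ S.FmlCodeM a ∧ S.AllC v a al ∧ S.SubF v t a a' ∧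
    S.ImpC al a' x) ∨
  -- A5 : ∀v (a → b) → (∀v a → ∀v b)
  (∃ v a b ab alab ala alb r, S.FmlCodeM a ∧ S.FmlCodeM b ∧ S.ImpC a b ab ∧
    S.AllC v ab alab ∧ S.AllC v a ala ∧ S.AllC v b alb ∧ S.ImpC ala alb r ∧
    S.ImpC alab r x) ∨
  -- A6 : a → ∀v a, for v not free in a
  (∃ v a ala, S.FmlCodeM a ∧ S.FreeF v a (S.num 0) ∧ S.AllC v a ala ∧ S.ImpC a ala x) ∨
  -- E1 : t = t
  (∃ t, S.TermCodeM t ∧ S.EqC t t x) ∨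
  -- E2 : u = w → w = u (variables)
  (∃ u w vu vw e1 e2, S.VarC u vu ∧ S.VarC w vw ∧ S.EqC vu vw e1 ∧ S.EqC vw vu e2 ∧
    S.ImpC e1 e2 x) ∨
  -- E3 : u = w → (w = z → u = z) (variables)
  (∃ u w z vu vw vz e1 e2 e3 r, S.VarC u vu ∧ S.VarC w vw ∧ S.VarC z vz ∧
    S.EqC vu vw e1 ∧ S.EqC vw vz e2 ∧ S.EqC vu vz e3 ∧ S.ImpC e2 e3 r ∧ S.ImpC e1 r x) ∨
  -- E4 : congruence of +, ·, < with respect to = (variables)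
  (∃ u1 w1 u2 w2 a1 b1 a2 b2 e1 e2 s1 s2 es r,
    S.VarC u1 a1 ∧ S.VarC w1 b1 ∧ S.VarC u2 a2 ∧ S.VarC w2 b2 ∧
    S.EqC a1 b1 e1 ∧ S.EqC a2 b2 e2 ∧
    ((S.AddC a1 a2 s1 ∧ S.AddC b1 b2 s2 ∧ S.EqC s1 s2 es) ∨
     (S.MulC a1 a2 s1 ∧ S.MulC b1 b2 s2 ∧ S.EqC s1 s2 es) ∨
     (S.LtC a1 a2 s1 ∧ S.LtC b1 b2 s2 ∧ S.ImpC s1 s2 es)) ∧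
    S.ImpC e2 es r ∧ S.ImpC e1 r x) ∨
  -- E5 : congruence of = (variables)
  (∃ u1 w1 u2 w2 a1 b1 a2 b2 e1 e2 d1 d2 inner r,
    S.VarC u1 a1 ∧ S.VarC w1 b1 ∧ S.VarC u2 a2 ∧ S.VarC w2 b2 ∧
    S.EqC a1 b1 e1 ∧ S.EqC a2 b2 e2 ∧ S.EqC a1 a2 d1 ∧ S.EqC b1 b2 d2 ∧
    S.ImpC d1 d2 inner ∧ S.ImpC e2 inner r ∧ S.ImpC e1 r x)

/-- Logical axioms: generalizations of instances of the axiom schemes. -/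
def LogAx (x : M) : Prop := ∃ y, S.LogAxCore y ∧ S.GenOf y x

/-- `s` codes a proof of `φ` from the set `Γ ⊆ M` of (codes of) sentences:
every entry is a logical axiom, a member of `Γ`, or follows by modus ponens. -/
def ProofFrom (Γ : Set M) (s φ : M) : Prop :=
  (∃ i, S.SeqAt s i φ) ∧
  ∀ i x, S.SeqAt s i x →
    S.LogAx x ∨ x ∈ Γ ∨
    (∃ j k y z, S.lt j i ∧ S.lt k i ∧ S.SeqAt s j y ∧ S.SeqAt s k z ∧ S.ImpC y x z)

/-- Provability (in the sense of `M`) from the axiom set `Γ ⊆ M`. -/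
def ProvFrom (Γ : Set M) (φ : M) : Prop := ∃ s, S.ProofFrom Γ s φ

/-- `M ⊨ Con_Γ` : there is no (possibly nonstandard) proof of a contradiction from `Γ`. -/
def ConOf (Γ : Set M) : Prop :=
  ¬ ∃ φ nφ, S.NotC φ nφ ∧ S.ProvFrom Γ φ ∧ S.ProvFrom Γ nφ

/-- `M ⊨ Con_T` for a (standard) theory `T`: `M` thinks every finite subtheory
of `T` is consistent. -/
def SatConTheory (T : Set Fml) : Prop :=
  ∀ F : Finset Fml, ↑F ⊆ T → S.ConOf {x : M | ∃ φ ∈ F, x = S.num (Fml.code φ)}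

/-! ### Coded sets, standard systems, filters on `P_𝔛` -/

/-- `A` is unbounded in `M`. -/
def Unb (A : Set M) : Prop := ∀ b, ∃ a ∈ A, S.lt b a

/-- `P_𝔛`: the collection of unbounded sets in `𝔛` (a partial order under `⊆`). -/
def PX (𝔛 : Set (Set M)) : Set (Set M) := {A | A ∈ 𝔛 ∧ S.Unb A}

/-- The `a`-th slice `(A)_a = {b | ⟨a,b⟩ ∈ A}`. -/
def SliceAt (A : Set M) (a : M) : Set M := {b | ∃ p, S.PairRel p a b ∧ p ∈ A}

/-- A function `M → M` is coded in `𝔛` if its graph (via the canonical pairing)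
belongs to `𝔛`. -/
def CodedFun (𝔛 : Set (Set M)) (f : M → M) : Prop :=
  ∃ G ∈ 𝔛, ∀ a b, f a = b ↔ b ∈ S.SliceAt G a

/-- A family `F` of sets is definable (over `(M,𝔛)`) if `{a | (A)_a ∈ F} ∈ 𝔛`
for every `A ∈ 𝔛`. -/
def DefinableFam (𝔛 F : Set (Set M)) : Prop :=
  ∀ A ∈ 𝔛, {a : M | S.SliceAt A a ∈ F} ∈ 𝔛

/-- `F` is a complete family: every function coded in `𝔛` with bounded range is
constant on some member of `F`. -/
def CompleteOn (𝔛 F : Set (Set M)) : Prop :=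
  ∀ f : M → M, S.CodedFun 𝔛 f → (∃ b, ∀ a, S.lt (f a) b) →
    ∃ A ∈ F, ∀ x ∈ A, ∀ y ∈ A, f x = f y

/-- The standard system `SSy(M)`: standard parts of the `M`-coded sets. -/
def SSy : Set (Set ℕ) := {A | ∃ c : M, ∀ n : ℕ, (n ∈ A ↔ S.MemRel (S.num n) c)}

/-- `M` is nonstandard. -/
def Nonstd : Prop := ∃ a : M, ∀ n : ℕ, a ≠ S.num n

/-- `M` is recursively saturated: every recursive type (in the variable `0`, with
finitely many parameters assigned to the variables `1, …, k`) that is finitely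
realized in `M` is realized in `M`. -/
def RecSat : Prop :=
  ∀ (p : Set Fml) (k : ℕ) (par : ℕ → M),
    (∀ φ ∈ p, Fml.IsFO φ ∧ φ.freeN ⊆ Finset.range (k + 1)) →
    ComputablePred (fun n => ∃ φ ∈ p, Fml.code φ = n) →
    (∀ F : Finset Fml, ↑F ⊆ p →
      ∃ a : M, ∀ φ ∈ F, SatFO S (fun i => if i = 0 then a else par i) φ) →
    ∃ a : M, ∀ φ ∈ p, SatFO S (fun i => if i = 0 then a else par i) φ

/-- `c` is the least code of the (bounded) set `A`. -/
def IsLeastCode (A : Set M) (c : M) : Prop :=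
  (∀ x, S.MemRel x c ↔ x ∈ A) ∧ ∀ c', (∀ x, S.MemRel x c' ↔ x ∈ A) → S.le c c'

/-- `A* = {⟨A ∩ I_{<a}⟩ | a ∈ M}`, the set of least codes of initial segments of `A`. -/
def star (A : Set M) : Set M :=
  {c | ∃ a, S.IsLeastCode (A ∩ {b | S.lt b a}) c}

end AStr

/-! ### Filters and partial orders of sets -/

/-- A filter on a partial order `P` of sets, ordered by inclusion: a proper, nonempty,
upward closed, downward directed subset of `P`. -/
def IsFilterOn {α : Type} (P F : Set (Set α)) : Prop :=
  F ⊆ P ∧ F.Nonempty ∧ F ≠ P ∧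
  (∀ A ∈ F, ∀ B ∈ P, A ⊆ B → B ∈ F) ∧
  (∀ A ∈ F, ∀ B ∈ F, ∃ C ∈ F, C ⊆ A ∧ C ⊆ B)

/-- An ultrafilter on a partial order of sets: a maximal filter. -/
def IsUltraOn {α : Type} (P U : Set (Set α)) : Prop :=
  IsFilterOn P U ∧ ∀ F, IsFilterOn P F → U ⊆ F → F = U

/-- A principal filter on a partial order of sets. -/
def IsPrincipalOn {α : Type} (P U : Set (Set α)) : Prop :=
  ∃ A ∈ P, U = {B | B ∈ P ∧ A ⊆ B}

/-- The countable chain condition for a partial order `P` of sets (ordered by `⊆`):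
every uncountable subset contains two distinct compatible elements. -/
def CCCOn {α : Type} (P : Set (Set α)) : Prop :=
  ∀ A : Set (Set α), A ⊆ P → ¬A.Countable →
    ∃ X ∈ A, ∃ Y ∈ A, X ≠ Y ∧ ∃ Z ∈ P, Z ⊆ X ∧ Z ⊆ Y

/-- `𝔛` is a Boolean algebra of sets. -/
def IsBoolAlg {α : Type} (𝔛 : Set (Set α)) : Prop :=
  Set.univ ∈ 𝔛 ∧ ∅ ∈ 𝔛 ∧
  (∀ A ∈ 𝔛, ∀ B ∈ 𝔛, A ∪ B ∈ 𝔛) ∧ (∀ A ∈ 𝔛, ∀ B ∈ 𝔛, A ∩ B ∈ 𝔛) ∧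
  (∀ A ∈ 𝔛, Aᶜ ∈ 𝔛)

/-- A filter on the Boolean algebra `𝔛`. -/
def IsBAFilter {α : Type} (𝔛 F : Set (Set α)) : Prop :=
  F ⊆ 𝔛 ∧ F.Nonempty ∧ ∅ ∉ F ∧
  (∀ A ∈ F, ∀ B ∈ 𝔛, A ⊆ B → B ∈ F) ∧
  (∀ A ∈ F, ∀ B ∈ F, A ∩ B ∈ F)

/-- An ultrafilter on the Boolean algebra `𝔛`: a maximal filter. -/
def IsBAUltra {α : Type} (𝔛 F : Set (Set α)) : Prop :=
  IsBAFilter 𝔛 F ∧ ∀ G, IsBAFilter 𝔛 G → F ⊆ G → G = F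

/-! ### Scott sets -/

/-- Oracle partial recursive functions: partial recursive in the oracle `O`. -/
inductive RecursiveIn (O : ℕ →. ℕ) : (ℕ →. ℕ) → Prop
  | oracle : RecursiveIn O O
  | zero : RecursiveIn O (pure 0)
  | succ : RecursiveIn O Nat.succ
  | left : RecursiveIn O ↑fun n : ℕ => n.unpair.1
  | right : RecursiveIn O ↑fun n : ℕ => n.unpair.2
  | pair {f g} : RecursiveIn O f → RecursiveIn O g →
      RecursiveIn O fun n => Nat.pair <$> f n <*> g n
  | comp {f g} : RecursiveIn O f → RecursiveIn O g →
      RecursiveIn O fun n => g n >>= f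
  | prec {f g} : RecursiveIn O f → RecursiveIn O g →
      RecursiveIn O (Nat.unpaired fun a n =>
        n.rec (f a) fun y IH => do let i ← IH; g (Nat.pair a (Nat.pair y i)))
  | rfind {f} : RecursiveIn O f →
      RecursiveIn O fun a => Nat.rfind fun n => (fun m => m = 0) <$> f (Nat.pair a n)

/-- The characteristic function of a set of natural numbers. -/
noncomputable def chi (A : Set ℕ) : ℕ →. ℕ :=
  fun n => Part.some (@ite _ (n ∈ A) (Classical.propDecidable _) 1 0)

/-- Turing reducibility: `B ≤_T A`. -/
def TuringLe (B A : Set ℕ) : Prop := RecursiveIn (chi A) (chi B)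

/-- A set of naturals coding a binary tree (codes of finite binary strings,
closed under initial segments). -/
def IsTreeCode (T : Set ℕ) : Prop :=
  (∀ n ∈ T, ∃ l : List Bool, Encodable.encode l = n) ∧
  (∀ l₁ l₂ : List Bool, l₁ <+: l₂ → Encodable.encode l₂ ∈ T → Encodable.encode l₁ ∈ T)

/-- `B` (as the characteristic function of a branch) is an infinite branch of the
binary tree coded by `T`. -/
def IsBranchThrough (B T : Set ℕ) : Prop :=
  ∀ n : ℕ, ∃ l : List Bool, l.length = n ∧
    (∀ i : Fin l.length, (l.get i = true ↔ (i : ℕ) ∈ B)) ∧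
    Encodable.encode l ∈ T

/-- A Scott set: a nonempty Boolean algebra of subsets of `ω` closed under relative
recursion and containing an infinite branch of every infinite binary tree coded in it. -/
def IsScottSet (𝔛 : Set (Set ℕ)) : Prop :=
  𝔛.Nonempty ∧
  (∀ A ∈ 𝔛, ∀ B ∈ 𝔛, A ∪ B ∈ 𝔛) ∧
  (∀ A ∈ 𝔛, Aᶜ ∈ 𝔛) ∧
  (∀ A ∈ 𝔛, ∀ B : Set ℕ, TuringLe B A → B ∈ 𝔛) ∧
  (∀ T ∈ 𝔛, IsTreeCode T → T.Infinite → ∃ B ∈ 𝔛, IsBranchThrough B T)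

/-- The sets represented in the theory `T`. -/
def repSet (T : Set Fml) : Set (Set ℕ) :=
  {A | ∃ φ : Fml, Fml.IsFO φ ∧ φ.freeN ⊆ {0} ∧
    ∀ n : ℕ, (n ∈ A → Proves T (φ.substN 0 (numeral n))) ∧
      (n ∉ A → Proves T (Fml.not (φ.substN 0 (numeral n))))}

/-- Martin's axiom. -/
def MartinsAxiom : Prop :=
  ∀ (P : Type) (_ : PartialOrder P),
    (∀ A : Set P, ¬A.Countable → ∃ x ∈ A, ∃ y ∈ A, x ≠ y ∧ ∃ z, z ≤ x ∧ z ≤ y) →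
    ∀ 𝒟 : Set (Set P), (∀ D ∈ 𝒟, ∀ x : P, ∃ y ∈ D, y ≤ x) →
      Cardinal.mk 𝒟 < Cardinal.continuum →
      ∃ F : Set P, F.Nonempty ∧ (∀ x ∈ F, ∀ y, x ≤ y → y ∈ F) ∧
        (∀ x ∈ F, ∀ y ∈ F, ∃ z ∈ F, z ≤ x ∧ z ≤ y) ∧
        ∀ D ∈ 𝒟, (F ∩ D).Nonempty

/-! ### Auxiliary development for Statement 5 -/

set_option linter.unusedSectionVars false

namespace Stmt5

variable {M : Type} {S : AStr M} {𝔛 : Set (Set M)}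

namespace PA

variable (hp : PAminusSem S)
include hp

theorem add_assoc : ∀ a b c : M, S.add a (S.add b c) = S.add (S.add a b) c := hp.1
theorem add_comm : ∀ a b : M, S.add a b = S.add b a := hp.2.1
theorem mul_comm : ∀ a b : M, S.mul a b = S.mul b a := hp.2.2.2.1
theorem distrib : ∀ a b c : M, S.mul a (S.add b c) = S.add (S.mul a b) (S.mul a c) :=
  hp.2.2.2.2.1
theorem add_zero : ∀ a : M, S.add a S.zero = a := hp.2.2.2.2.2.1
theorem mul_zero : ∀ a : M, S.mul a S.zero = S.zero := hp.2.2.2.2.2.2.1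
theorem mul_one : ∀ a : M, S.mul a S.one = a := hp.2.2.2.2.2.2.2.1
theorem lt_trans : ∀ a b c : M, S.lt a b → S.lt b c → S.lt a c := hp.2.2.2.2.2.2.2.2.1
theorem lt_irrefl : ∀ a : M, ¬ S.lt a a := hp.2.2.2.2.2.2.2.2.2.1
theorem tricho : ∀ a b : M, S.lt a b ∨ a = b ∨ S.lt b a := hp.2.2.2.2.2.2.2.2.2.2.1
theorem add_lt : ∀ a b c : M, S.lt a b → S.lt (S.add a c) (S.add b c) :=
  hp.2.2.2.2.2.2.2.2.2.2.2.1
theorem mul_lt : ∀ a b c : M, S.lt S.zero c → S.lt a b → S.lt (S.mul a c) (S.mul b c) :=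
  hp.2.2.2.2.2.2.2.2.2.2.2.2.1
theorem lt_ex : ∀ a b : M, S.lt a b → ∃ c, S.add a c = b :=
  hp.2.2.2.2.2.2.2.2.2.2.2.2.2.1
theorem zero_lt_one : S.lt S.zero S.one := hp.2.2.2.2.2.2.2.2.2.2.2.2.2.2.1
theorem one_or : ∀ a : M, S.lt S.zero a → a = S.one ∨ S.lt S.one a :=
  hp.2.2.2.2.2.2.2.2.2.2.2.2.2.2.2.1
theorem zero_or : ∀ a : M, a = S.zero ∨ S.lt S.zero a :=
  hp.2.2.2.2.2.2.2.2.2.2.2.2.2.2.2.2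

theorem zero_add (a : M) : S.add S.zero a = a := by
  rw [add_comm hp]; exact add_zero hp a

theorem lt_succ_self (a : M) : S.lt a (S.add a S.one) := by
  have h := add_lt hp S.zero S.one a (zero_lt_one hp)
  rwa [zero_add hp, add_comm hp] at h

theorem ne_of_lt {a b : M} (hl : S.lt a b) : a ≠ b :=
  fun e => lt_irrefl hp b (e ▸ hl)

theorem lt_asymm {a b : M} (h1 : S.lt a b) (h2 : S.lt b a) : False :=
  lt_irrefl hp a (lt_trans hp a b a h1 h2)

theorem add_lt_left {a b : M} (c : M) (hl : S.lt a b) : S.lt (S.add c a) (S.add c b) := by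
  rw [add_comm hp c a, add_comm hp c b]; exact add_lt hp _ _ _ hl

theorem add_cancel {a b c : M} (e : S.add a c = S.add b c) : a = b := by
  rcases tricho hp a b with hl | he | hl
  · have h := add_lt hp a b c hl; rw [e] at h; exact absurd h (lt_irrefl hp _)
  · exact he
  · have h := add_lt hp b a c hl; rw [e] at h; exact absurd h (lt_irrefl hp _)

theorem lt_add_cancel {a b c : M} (h : S.lt (S.add a c) (S.add b c)) : S.lt a b := by
  rcases tricho hp a b with hl | he | hl
  · exact hl
  · subst he; exact absurd h (lt_irrefl hp _)
  · exact absurd (lt_trans hp _ _ _ h (add_lt hp b a c hl)) (lt_irrefl hp _)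

theorem le_refl (a : M) : S.le a a := Or.inr rfl

theorem le_of_lt {a b : M} (h : S.lt a b) : S.le a b := Or.inl h

theorem le_of_eq {a b : M} (h : a = b) : S.le a b := Or.inr h

theorem lt_of_le_of_lt {a b c : M} (h1 : S.le a b) (h2 : S.lt b c) : S.lt a c := by
  rcases h1 with h1 | h1
  · exact lt_trans hp _ _ _ h1 h2
  · rwa [h1]

theorem lt_of_lt_of_le {a b c : M} (h1 : S.lt a b) (h2 : S.le b c) : S.lt a c := by
  rcases h2 with h2 | h2
  · exact lt_trans hp _ _ _ h1 h2
  · rwa [← h2]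

theorem le_trans' {a b c : M} (h1 : S.le a b) (h2 : S.le b c) : S.le a c := by
  rcases h1 with h1 | h1
  · exact Or.inl (lt_of_lt_of_le hp h1 h2)
  · rwa [h1]

theorem add_le {a b : M} (c : M) (h : S.le a b) : S.le (S.add a c) (S.add b c) := by
  rcases h with h | h
  · exact Or.inl (add_lt hp _ _ _ h)
  · exact Or.inr (by rw [h])

theorem le_add_right (a c : M) : S.le a (S.add a c) := by
  rcases zero_or hp c with e | hl
  · exact Or.inr (by rw [e, add_zero hp])
  · refine Or.inl ?_
    have h := add_lt_left hp a hl
    rwa [add_zero hp] at h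

theorem le_add_left (a c : M) : S.le a (S.add c a) := by
  rw [add_comm hp]; exact le_add_right hp a c

theorem succ_le_of_lt {a b : M} (hl : S.lt a b) : S.le (S.add a S.one) b := by
  obtain ⟨c, e⟩ := lt_ex hp a b hl
  rcases zero_or hp c with e0 | h0
  · rw [e0, add_zero hp] at e; exact absurd e (ne_of_lt hp hl)
  · rcases one_or hp c h0 with e1 | h1
    · rw [e1] at e; exact Or.inr e
    · refine Or.inl ?_
      have h := add_lt hp S.one c a h1
      rw [add_comm hp S.one a, add_comm hp c a] at h
      rwa [e] at h

theorem lt_succ_iff_le {a b : M} : S.lt a (S.add b S.one) ↔ S.le a b := by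
  constructor
  · intro h
    rcases succ_le_of_lt hp h with h' | h'
    · exact Or.inl (lt_add_cancel hp h')
    · exact Or.inr (add_cancel hp h')
  · intro h
    rcases h with h | h
    · exact lt_trans hp _ _ _ h (lt_succ_self hp b)
    · rw [h]; exact lt_succ_self hp b

theorem zero_le (a : M) : S.le S.zero a := by
  rcases zero_or hp a with e | h
  · exact Or.inr e.symm
  · exact Or.inl h

theorem two_mul' (a : M) : S.mul S.two a = S.add a a := by
  rw [mul_comm hp]
  show S.mul a (S.add S.one S.one) = S.add a a
  rw [distrib hp, mul_one hp]

theorem dbl_lt {a b : M} (hl : S.lt a b) : S.lt (S.add a a) (S.add b b) :=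
  lt_trans hp _ _ _ (add_lt hp _ _ a hl) (add_lt_left hp b hl)

theorem dbl_inj {a b : M} (e : S.add a a = S.add b b) : a = b := by
  rcases tricho hp a b with hl | he | hl
  · exact absurd (e ▸ dbl_lt hp hl) (lt_irrefl hp _)
  · exact he
  · have h := dbl_lt hp hl; rw [e] at h; exact absurd h (lt_irrefl hp _)

theorem dbl_le {a b : M} (h : S.le a b) : S.le (S.add a a) (S.add b b) := by
  rcases h with h | h
  · exact Or.inl (dbl_lt hp h)
  · exact Or.inr (by rw [h])

theorem dbl_le_cancel {a b : M} (e : S.le (S.add a a) (S.add b b)) : S.le a b := by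
  rcases tricho hp a b with hl | he | hl
  · exact Or.inl hl
  · exact Or.inr he
  · exact absurd (lt_of_le_of_lt hp e (dbl_lt hp hl)) (lt_irrefl hp _)

theorem mul_le {a b : M} (c : M) (h : S.le a b) : S.le (S.mul a c) (S.mul b c) := by
  rcases zero_or hp c with e | h0
  · exact Or.inr (by rw [e, mul_zero hp, mul_zero hp])
  · rcases h with h | h
    · exact Or.inl (mul_lt hp _ _ _ h0 h)
    · exact Or.inr (by rw [h])

theorem mul_le_left {a b : M} (c : M) (h : S.le a b) : S.le (S.mul c a) (S.mul c b) := by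
  rw [mul_comm hp c a, mul_comm hp c b]; exact mul_le hp c h

/-! #### Pairing -/

theorem pair_lt {a b a' b' : M} (hs : S.lt (S.add a b) (S.add a' b')) :
    S.lt (S.add (S.mul (S.add a b) (S.add (S.add a b) S.one)) (S.mul S.two a))
      (S.add (S.mul (S.add a' b') (S.add (S.add a' b') S.one)) (S.mul S.two a')) := by
  set s := S.add a b with hs1
  set s' := S.add a' b' with hs2
  set e := S.add s S.one with he
  -- e*(e+1) = s*(s+1) + (e+e)
  have key : S.mul e (S.add e S.one) = S.add (S.mul s (S.add s S.one)) (S.add e e) := by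
    rw [distrib hp e e S.one, mul_one hp]
    have h1 : S.mul e e = S.add (S.mul s (S.add s S.one)) e := by
      conv_lhs => rw [he]
      rw [distrib hp e s S.one, mul_one hp, mul_comm hp e s, ← he]
    rw [h1, add_assoc hp (S.mul s (S.add s S.one)) e e]
  -- first: s*(s+1) + 2a < e*(e+1)
  have h2a : S.le (S.add a a) (S.add s s) := dbl_le hp (le_add_right hp a b)
  have hss : S.lt (S.add s s) (S.add e e) := dbl_lt hp (lt_succ_self hp s)
  have step1 : S.lt (S.add (S.mul s (S.add s S.one)) (S.mul S.two a))
      (S.mul e (S.add e S.one)) := by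
    rw [key, two_mul' hp]
    exact add_lt_left hp _ (lt_of_le_of_lt hp h2a hss)
  -- second: e*(e+1) ≤ s'*(s'+1)
  have hes : S.le e s' := succ_le_of_lt hp hs
  have step2 : S.le (S.mul e (S.add e S.one)) (S.mul s' (S.add s' S.one)) := by
    refine le_trans' hp (mul_le hp _ hes) ?_
    exact mul_le_left hp s' (add_le hp S.one hes)
  refine lt_of_lt_of_le hp (lt_of_lt_of_le hp step1 step2) ?_
  exact le_add_right hp _ _

theorem pair_inj {p a b a' b' : M} (h1 : S.PairRel p a b) (h2 : S.PairRel p a' b') :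
    a = a' ∧ b = b' := by
  unfold AStr.PairRel at h1 h2
  have e2 := h1.symm.trans h2
  rcases tricho hp (S.add a b) (S.add a' b') with hl | hs | hl
  · exact absurd (e2 ▸ pair_lt hp hl) (lt_irrefl hp _)
  · rw [hs, add_comm hp _ (S.mul S.two a), add_comm hp _ (S.mul S.two a')] at e2
    have ea : a = a' := by
      have := add_cancel hp e2
      rw [two_mul' hp, two_mul' hp] at this
      exact dbl_inj hp this
    refine ⟨ea, ?_⟩
    rw [ea, add_comm hp a' b, add_comm hp a' b'] at hs
    exact add_cancel hp hs
  · have h := pair_lt hp hl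
    rw [e2] at h
    exact absurd h (lt_irrefl hp _)

theorem pair_code_inj {p p' a b : M} (h1 : S.PairRel p a b) (h2 : S.PairRel p' a b) :
    p = p' := by
  unfold AStr.PairRel at h1 h2
  have e := h1.trans h2.symm
  rw [two_mul' hp, two_mul' hp] at e
  exact dbl_inj hp e

theorem pair_bound1 {p a b : M} (h : S.PairRel p a b) : S.le a p := by
  unfold AStr.PairRel at h
  rw [two_mul' hp, two_mul' hp] at h
  have : S.le (S.add a a) (S.add p p) := h ▸ le_add_left hp _ _
  exact dbl_le_cancel hp this

theorem pair_bound2 {p a b : M} (h : S.PairRel p a b) : S.le b (S.add p p) := by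
  unfold AStr.PairRel at h
  rw [two_mul' hp, two_mul' hp] at h
  set s := S.add a b with hs
  have hb : S.le b s := le_add_left hp b a
  have h1 : S.le s (S.mul s (S.add s S.one)) := by
    have : S.mul s (S.add s S.one) = S.add (S.mul s s) s := by
      rw [distrib hp, mul_one hp]
    rw [this]
    exact le_add_left hp s _
  have h2 : S.le (S.mul s (S.add s S.one)) (S.add p p) := h ▸ le_add_right hp _ _
  exact le_trans' hp hb (le_trans' hp h1 h2)

theorem pair_self_le {p a b : M} (h : S.PairRel p a b) :
    S.le p (S.add (S.mul (S.add a b) (S.add (S.add a b) S.one)) (S.mul S.two a)) := by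
  unfold AStr.PairRel at h
  rw [← h, two_mul' hp]
  exact dbl_le_cancel hp (le_add_right hp _ _)

end PA

/-! #### Satisfaction lemmas -/

theorem sat_eq {v w} {t u : PTerm} :
    Sat S 𝔛 v w (.eq t u) ↔ t.val S v = u.val S v := Iff.rfl
theorem sat_lt {v w} {t u : PTerm} :
    Sat S 𝔛 v w (.lt t u) ↔ S.lt (t.val S v) (u.val S v) := Iff.rfl
theorem sat_mem {v w} {t : PTerm} {k} :
    Sat S 𝔛 v w (.mem t k) ↔ t.val S v ∈ w k := Iff.rfl
theorem sat_not {v w} {φ} : Sat S 𝔛 v w (.not φ) ↔ ¬ Sat S 𝔛 v w φ := Iff.rfl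
theorem sat_imp {v w} {φ ψ} :
    Sat S 𝔛 v w (.imp φ ψ) ↔ (Sat S 𝔛 v w φ → Sat S 𝔛 v w ψ) := Iff.rfl
theorem sat_all {v w} {x φ} :
    Sat S 𝔛 v w (.all x φ) ↔ ∀ a : M, Sat S 𝔛 (Function.update v x a) w φ := Iff.rfl
theorem sat_and {v w} {φ ψ} :
    Sat S 𝔛 v w (φ.and ψ) ↔ Sat S 𝔛 v w φ ∧ Sat S 𝔛 v w ψ := by
  show ¬ (Sat S 𝔛 v w φ → ¬ Sat S 𝔛 v w ψ) ↔ _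
  tauto

theorem val_agree {v v' : ℕ → M} {t : PTerm} (h : ∀ n ∈ t.vars, v n = v' n) :
    t.val S v = t.val S v' := by
  induction t with
  | var n => exact h n (by simp [PTerm.vars])
  | zero => rfl
  | one => rfl
  | add t u iht ihu =>
    simp only [PTerm.val]
    rw [iht fun n hn => h n (by simp [PTerm.vars]; exact Or.inl hn),
      ihu fun n hn => h n (by simp [PTerm.vars]; exact Or.inr hn)]
  | mul t u iht ihu =>
    simp only [PTerm.val]
    rw [iht fun n hn => h n (by simp [PTerm.vars]; exact Or.inl hn),
      ihu fun n hn => h n (by simp [PTerm.vars]; exact Or.inr hn)]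

theorem sat_agree {φ : Fml} : ∀ {v v' : ℕ → M} {w : ℕ → Set M},
    (∀ n ∈ φ.freeN, v n = v' n) → (Sat S 𝔛 v w φ ↔ Sat S 𝔛 v' w φ) := by
  induction φ with
  | eq t u =>
    intro v v' w h
    rw [sat_eq, sat_eq,
      val_agree (t := t) fun n hn => h n (by simp [Fml.freeN]; exact Or.inl hn),
      val_agree (t := u) fun n hn => h n (by simp [Fml.freeN]; exact Or.inr hn)]
  | lt t u =>
    intro v v' w h
    rw [sat_lt, sat_lt,
      val_agree (t := t) fun n hn => h n (by simp [Fml.freeN]; exact Or.inl hn),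
      val_agree (t := u) fun n hn => h n (by simp [Fml.freeN]; exact Or.inr hn)]
  | mem t k =>
    intro v v' w h
    rw [sat_mem, sat_mem, val_agree (t := t) fun n hn => h n (by simpa [Fml.freeN] using hn)]
  | not φ ih =>
    intro v v' w h
    rw [sat_not, sat_not, ih fun n hn => h n (by simpa [Fml.freeN] using hn)]
  | imp φ ψ ihφ ihψ =>
    intro v v' w h
    rw [sat_imp, sat_imp, ihφ fun n hn => h n (by simp [Fml.freeN]; exact Or.inl hn),
      ihψ fun n hn => h n (by simp [Fml.freeN]; exact Or.inr hn)]
  | all x φ ih =>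
    intro v v' w h
    rw [sat_all, sat_all]
    refine forall_congr' fun a => ih fun n hn => ?_
    by_cases hx : n = x
    · subst hx; simp
    · rw [Function.update_of_ne hx, Function.update_of_ne hx]
      exact h n (by simp [Fml.freeN, Finset.mem_erase]; exact ⟨hx, hn⟩)
  | allS k φ ih =>
    intro v v' w h
    show (∀ X ∈ 𝔛, _) ↔ (∀ X ∈ 𝔛, _)
    exact forall₂_congr fun X _ => ih fun n hn => h n (by simpa [Fml.freeN] using hn)

/-- Renaming of variables (used on atomic formulas only). -/
def renT (σ : ℕ → ℕ) : PTerm → PTerm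
  | .var n => .var (σ n)
  | .zero => .zero
  | .one => .one
  | .add t u => .add (renT σ t) (renT σ u)
  | .mul t u => .mul (renT σ t) (renT σ u)

theorem val_renT {σ : ℕ → ℕ} {v : ℕ → M} {t : PTerm} :
    (renT σ t).val S v = t.val S (fun n => v (σ n)) := by
  induction t <;> simp [renT, PTerm.val, *]

/-- Semantic `Δ⁰₁` comprehension. -/
theorem compr (hR : SatRCA0 S 𝔛) {w : ℕ → Set M} (hw : ∀ k, w k ∈ 𝔛) (x : ℕ) (v : ℕ → M)
    {θ : Fml} (hθ : IsDelta0 θ) {R : M → Prop}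
    (hc : ∀ a, Sat S 𝔛 (Function.update v x a) w θ ↔ R a) : {a | R a} ∈ 𝔛 := by
  classical
  set y := θ.freeN.sup id + x + 1 with hy
  have hyf : y ∉ θ.freeN := by
    intro hm
    have hle : y ≤ θ.freeN.sup id := by simpa using Finset.le_sup (f := id) hm
    omega
  have key : ∀ (u : ℕ → M) (b : M), Sat S 𝔛 (Function.update u y b) w θ ↔ Sat S 𝔛 u w θ :=
    fun u b => sat_agree fun n hn =>
      Function.update_of_ne (fun e : n = y => hyf (e ▸ hn)) _ _
  have hex : ∀ u, Sat S 𝔛 u w (Fml.ex y θ) ↔ Sat S 𝔛 u w θ := by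
    intro u
    show (¬ ∀ b : M, ¬ Sat S 𝔛 (Function.update u y b) w θ) ↔ _
    constructor
    · intro h
      by_contra hns
      exact h fun b => by rw [key]; exact hns
    · intro h hall
      exact hall S.zero (by rw [key u S.zero]; exact h)
  have hall : ∀ u, Sat S 𝔛 u w (Fml.all y θ) ↔ Sat S 𝔛 u w θ := by
    intro u
    rw [sat_all]
    constructor
    · intro h; rw [← key u S.zero]; exact h S.zero
    · intro h b; rw [key]; exact h
  have hcomp := hR.2.2 (Fml.ex y θ) (Fml.all y θ) x ⟨y, θ, hθ, rfl⟩ ⟨y, θ, hθ, rfl⟩ v w hw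
    (fun a => by rw [hex, hall])
  have hset : {a : M | Sat S 𝔛 (Function.update v x a) w (Fml.ex y θ)} = {a | R a} := by
    ext a
    rw [Set.mem_setOf_eq, Set.mem_setOf_eq, hex, hc]
  rwa [hset] at hcomp

/-! #### Bounded quantifiers and reflection -/

/-- Bounded existential quantifier `∃ x < t`. -/
def bex (x : ℕ) (t : PTerm) (θ : Fml) : Fml :=
  .not (.all x (.imp (.lt (.var x) t) (.not θ)))

/-- Bounded universal quantifier `∀ x < t`. -/
def ball (x : ℕ) (t : PTerm) (θ : Fml) : Fml := .all x (.imp (.lt (.var x) t) θ)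

theorem isDelta0_ball {x t θ} (hx : x ∉ t.vars) (hθ : IsDelta0 θ) :
    IsDelta0 (ball x t θ) := IsDelta0.ball x t hx hθ

theorem isDelta0_bex {x t θ} (hx : x ∉ t.vars) (hθ : IsDelta0 θ) :
    IsDelta0 (bex x t θ) := .not (IsDelta0.ball x t hx (.not hθ))

theorem isDelta0_and {φ ψ} (h1 : IsDelta0 φ) (h2 : IsDelta0 ψ) : IsDelta0 (φ.and ψ) :=
  .not (.imp h1 (.not h2))

theorem sat_ball {v w x t θ} (hx : x ∉ t.vars) :
    Sat S 𝔛 v w (ball x t θ) ↔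
      ∀ c, S.lt c (t.val S v) → Sat S 𝔛 (Function.update v x c) w θ := by
  rw [ball, sat_all]
  refine forall_congr' fun c => ?_
  rw [sat_imp, sat_lt]
  have hv : t.val S (Function.update v x c) = t.val S v :=
    val_agree fun n hn => Function.update_of_ne (fun e : n = x => hx (e ▸ hn)) _ _
  have hvx : (PTerm.var x).val S (Function.update v x c) = c := by
    simp [PTerm.val]
  rw [hv, hvx]

theorem sat_bex {v w x t θ} (hx : x ∉ t.vars) :
    Sat S 𝔛 v w (bex x t θ) ↔
      ∃ c, S.lt c (t.val S v) ∧ Sat S 𝔛 (Function.update v x c) w θ := by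
  have : bex x t θ = .not (ball x t (.not θ)) := rfl
  rw [this, sat_not, sat_ball hx]
  push_neg
  simp only [sat_not, not_not]

/-! #### Iterated doubling (for bounds) -/

def dblM (S : AStr M) : ℕ → M → M
  | 0, a => a
  | n + 1, a => S.add (dblM S n a) (dblM S n a)

theorem le_dblM (hp : PAminusSem S) (n : ℕ) (a : M) : S.le a (dblM S n a) := by
  induction n with
  | zero => exact PA.le_refl hp a
  | succ n ih => exact PA.le_trans' hp ih (PA.le_add_right hp _ _)

theorem dblM_le (hp : PAminusSem S) {a b : M} (n : ℕ) (h : S.le a b) :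
    S.le (dblM S n a) (dblM S n b) := by
  induction n with
  | zero => exact h
  | succ n ih => exact PA.dbl_le hp ih

theorem dblM_add (n : ℕ) (a : M) : dblM S n (S.add a a) = S.add (dblM S n a) (dblM S n a) := by
  induction n with
  | zero => rfl
  | succ n ih =>
    show S.add (dblM S n (S.add a a)) (dblM S n (S.add a a)) = _
    rw [ih]
    rfl

def dblPT : ℕ → PTerm → PTerm
  | 0, t => t
  | n + 1, t => .add (dblPT n t) (dblPT n t)

theorem val_dblPT {n t} {v : ℕ → M} : (dblPT n t).val S v = dblM S n (t.val S v) := by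
  induction n with
  | zero => rfl
  | succ n ih => show S.add _ _ = _; rw [ih]; rfl

theorem vars_dblPT {n t} : (dblPT n t).vars = t.vars := by
  induction n with
  | zero => rfl
  | succ n ih => show (dblPT n t).vars ∪ (dblPT n t).vars = _; rw [ih, Finset.union_self]

/-! #### Pair and tuple formulas -/

def two' : PTerm := .add .one .one

def pairFml (tp ta tb : PTerm) : Fml :=
  .eq (.mul two' tp) (.add (.mul (.add ta tb) (.add (.add ta tb) .one)) (.mul two' ta))

theorem isDelta0_pairFml {tp ta tb} : IsDelta0 (pairFml tp ta tb) := .eq _ _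

theorem sat_pairFml {v w} {tp ta tb} :
    Sat S 𝔛 v w (pairFml tp ta tb) ↔
      S.PairRel (tp.val S v) (ta.val S v) (tb.val S v) := Iff.rfl

def TupR (S : AStr M) : List M → M → Prop
  | [], p => p = S.zero
  | a :: as, p => ∃ q, S.PairRel p a q ∧ TupR S as q

theorem tupR_func (hp : PAminusSem S) {as : List M} :
    ∀ {p q : M}, TupR S as p → TupR S as q → p = q := by
  induction as with
  | nil => intro p q h1 h2; exact h1.trans h2.symm
  | cons a as ih =>
    rintro p q ⟨q1, pr1, t1⟩ ⟨q2, pr2, t2⟩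
    have e := ih t1 t2
    subst e
    exact PA.pair_code_inj hp pr1 pr2

theorem tupR_inj (hp : PAminusSem S) {as : List M} :
    ∀ {as' : List M} {p : M}, TupR S as p → TupR S as' p → as.length = as'.length →
      as = as' := by
  induction as with
  | nil =>
    intro as' p _ _ hl
    exact (List.eq_nil_of_length_eq_zero hl.symm).symm
  | cons a as ih =>
    rintro as' p ⟨q, pr, t⟩ h' hl
    cases as' with
    | nil => exact absurd hl (by simp)
    | cons a' as'' =>
      obtain ⟨q', pr', t'⟩ := h'
      obtain ⟨ea, eq'⟩ := PA.pair_inj hp pr pr'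
      subst ea
      subst eq'
      rw [ih t t' (by simpa using hl)]

theorem tupR_le (hp : PAminusSem S) {as : List M} :
    ∀ {p : M}, TupR S as p → ∀ a ∈ as, S.le a (dblM S as.length p) := by
  induction as with
  | nil => intro p _ a ha; exact absurd ha List.not_mem_nil
  | cons b as ih =>
    rintro p ⟨q, pr, t⟩ a ha
    rcases List.mem_cons.1 ha with e | hm
    · subst e
      exact PA.le_trans' hp (PA.pair_bound1 hp pr) (le_dblM hp _ _)
    · have h1 := ih t a hm
      have h2 : S.le (dblM S as.length q) (dblM S as.length (S.add p p)) :=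
        dblM_le hp _ (PA.pair_bound2 hp pr)
      rw [dblM_add] at h2
      exact PA.le_trans' hp h1 h2

def flatVars : List (ℕ × ℕ) → List ℕ
  | [] => []
  | (a, q) :: r => a :: q :: flatVars r

theorem fst_mem_flatVars {aq : ℕ × ℕ} {r : List (ℕ × ℕ)} (h : aq ∈ r) :
    aq.1 ∈ flatVars r := by
  induction r with
  | nil => exact absurd h List.not_mem_nil
  | cons bq r ih =>
    rcases List.mem_cons.1 h with e | hm
    · subst e; obtain ⟨a, q⟩ := aq; simp [flatVars]
    · obtain ⟨b, q'⟩ := bq; simp [flatVars]; right; right; exact ih hm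

/-- the bound term `p + p + 1` -/
def tb2 (pv : ℕ) : PTerm := .add (.add (.var pv) (.var pv)) .one

theorem vars_tb2 {pv} : (tb2 pv).vars = {pv} := by
  simp [tb2, PTerm.vars]

def tupF (pv : ℕ) : List (ℕ × ℕ) → Fml
  | [] => .eq (.var pv) .zero
  | (a, q) :: r => bex q (tb2 pv) ((pairFml (.var pv) (.var a) (.var q)).and (tupF q r))

theorem isDelta0_tupF {l : List (ℕ × ℕ)} :
    ∀ {pv : ℕ}, (pv :: flatVars l).Nodup → IsDelta0 (tupF pv l) := by
  induction l with
  | nil => intro pv _; exact .eq _ _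
  | cons aq r ih =>
    obtain ⟨a, q⟩ := aq
    intro pv hv
    have hfl : flatVars ((a, q) :: r) = a :: q :: flatVars r := rfl
    rw [hfl] at hv
    have hqpv : q ≠ pv := by
      intro e
      have := List.nodup_cons.1 hv
      exact this.1 (by rw [← e]; simp)
    have hrest : (q :: flatVars r).Nodup := by
      have h2 := (List.nodup_cons.1 hv).2
      have h3 := (List.nodup_cons.1 h2).2
      exact h3
    refine isDelta0_bex ?_ (isDelta0_and isDelta0_pairFml (ih hrest))
    rw [vars_tb2]
    simp [hqpv]

theorem sat_tupF (hp : PAminusSem S) {l : List (ℕ × ℕ)} :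
    ∀ {pv : ℕ} {v : ℕ → M} {w : ℕ → Set M}, (pv :: flatVars l).Nodup →
      (Sat S 𝔛 v w (tupF pv l) ↔ TupR S (l.map fun aq => v aq.1) (v pv)) := by
  induction l with
  | nil =>
    intro pv v w _
    show (PTerm.var pv).val S v = PTerm.zero.val S v ↔ _
    simp [PTerm.val, TupR]
  | cons aq r ih =>
    obtain ⟨a, q⟩ := aq
    intro pv v w hv
    have hfl : flatVars ((a, q) :: r) = a :: q :: flatVars r := rfl
    rw [hfl] at hv
    have hpv_notmem := (List.nodup_cons.1 hv).1
    have hrest2 := (List.nodup_cons.1 hv).2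
    have ha_notmem := (List.nodup_cons.1 hrest2).1
    have hrest : (q :: flatVars r).Nodup := (List.nodup_cons.1 hrest2).2
    have hq_notmem := (List.nodup_cons.1 hrest).1
    have hqpv : q ≠ pv := fun e => hpv_notmem (by rw [← e]; simp)
    have hqa : q ≠ a := fun e => ha_notmem (by rw [← e]; simp)
    have hbexcond : q ∉ (tb2 pv).vars := by rw [vars_tb2]; simp [hqpv]
    rw [tupF, sat_bex hbexcond]
    have hin : ∀ c : M,
        Sat S 𝔛 (Function.update v q c) w
            ((pairFml (.var pv) (.var a) (.var q)).and (tupF q r)) ↔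
          (S.PairRel (v pv) (v a) c ∧ TupR S (r.map fun aq => v aq.1) c) := by
      intro c
      rw [sat_and, sat_pairFml, ih hrest]
      have e1 : Function.update v q c pv = v pv := Function.update_of_ne (Ne.symm hqpv) _ _
      have e2 : Function.update v q c a = v a := Function.update_of_ne (Ne.symm hqa) _ _
      have e3 : Function.update v q c q = c := Function.update_self _ _ _
      have emap : (r.map fun aq => Function.update v q c aq.1) = r.map fun aq => v aq.1 := by
        refine List.map_congr_left fun bq hm => ?_
        refine Function.update_of_ne (fun e : bq.1 = q => ?_) _ _
        exact hq_notmem (e ▸ fst_mem_flatVars hm)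
      simp only [PTerm.val, e1, e2, e3, emap]
    constructor
    · rintro ⟨c, _, hc⟩
      exact ⟨c, (hin c).1 hc⟩
    · rintro ⟨c, hpair, htup⟩
      refine ⟨c, ?_, (hin c).2 ⟨hpair, htup⟩⟩
      show S.lt c ((tb2 pv).val S v)
      have : (tb2 pv).val S v = S.add (S.add (v pv) (v pv)) S.one := rfl
      rw [this]
      exact (PA.lt_succ_iff_le hp).2 (PA.pair_bound2 hp hpair)

/-! #### Simultaneous updates -/

def updL (v : ℕ → M) : List ℕ → List M → ℕ → M
  | [], _ => v
  | _ :: _, [] => v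
  | x :: xs, a :: as => Function.update (updL v xs as) x a

theorem updL_nil {v : ℕ → M} {as : List M} : updL v [] as = v := rfl

theorem updL_cons {v : ℕ → M} {x xs} {a : M} {as : List M} :
    updL v (x :: xs) (a :: as) = Function.update (updL v xs as) x a := rfl

theorem updL_not_mem {v : ℕ → M} : ∀ {xs : List ℕ} {as : List M} {m : ℕ},
    m ∉ xs → updL v xs as m = v m := by
  intro xs
  induction xs with
  | nil => intro as m _; rfl
  | cons x xs ih =>
    intro as m hm
    cases as with
    | nil => rfl
    | cons a as =>
      rw [updL_cons, Function.update_of_ne (fun e : m = x => hm (by rw [e]; simp))]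
      exact ih fun h => hm (List.mem_cons_of_mem _ h)

theorem updL_getD {v : ℕ → M} (d : M) : ∀ {xs : List ℕ} {as : List M},
    xs.Nodup → as.length = xs.length → ∀ {i : ℕ} (hi : i < xs.length),
      updL v xs as (xs[i]) = as.getD i d := by
  intro xs
  induction xs with
  | nil => intro as _ _ i hi; simp at hi
  | cons x xs ih =>
    intro as hnd hl i hi
    cases as with
    | nil => simp at hl
    | cons a as =>
      cases i with
      | zero =>
        show updL v (x :: xs) (a :: as) x = _
        rw [updL_cons]
        simp [Function.update_self]
      | succ i =>
        have hgi : (x :: xs)[i + 1] = xs[i]'(by simpa using hi) := by simp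
        rw [hgi, updL_cons]
        have hne : xs[i]'(by simpa using hi) ≠ x := by
          intro e
          exact (List.nodup_cons.1 hnd).1 (e ▸ List.getElem_mem _)
        rw [Function.update_of_ne hne]
        rw [ih (List.nodup_cons.1 hnd).2 (by simpa using hl) (by simpa using hi)]
        simp

theorem updL_indexOf {v : ℕ → M} (d : M) : ∀ {xs : List ℕ} {as : List M} {m : ℕ},
    as.length = xs.length → m ∈ xs → updL v xs as m = as.getD (xs.idxOf m) d := by
  intro xs
  induction xs with
  | nil => intro as m _ hm; simp at hm
  | cons x xs ih =>
    intro as m hl hm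
    cases as with
    | nil => simp at hl
    | cons a as =>
      by_cases e : m = x
      · subst e
        rw [List.idxOf_cons_self, updL_cons]
        simp [Function.update_self]
      · rw [updL_cons, Function.update_of_ne e,
          List.idxOf_cons_ne _ (fun h : x = m => e h.symm),
          ih (by simpa using hl) ((List.mem_cons.1 hm).resolve_left e)]
        simp

theorem updL_update_comm {v : ℕ → M} {x : ℕ} {c : M} : ∀ {xs : List ℕ} {as : List M},
    x ∉ xs → updL (Function.update v x c) xs as = Function.update (updL v xs as) x c := by
  intro xs
  induction xs with
  | nil => intro as _; rfl
  | cons y ys ih =>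
    intro as hx
    cases as with
    | nil => rfl
    | cons a as =>
      rw [updL_cons, updL_cons, ih fun h => hx (List.mem_cons_of_mem _ h)]
      rw [Function.update_comm (fun e : x = y => hx (by rw [e]; simp))]

/-! #### Blocks of bounded existential quantifiers -/

def bexs : List (ℕ × PTerm) → Fml → Fml
  | [], θ => θ
  | (x, t) :: r, θ => bex x t (bexs r θ)

theorem isDelta0_bexs {θ : Fml} (hθ : IsDelta0 θ) : ∀ {L : List (ℕ × PTerm)},
    (∀ pr ∈ L, (pr : ℕ × PTerm).1 ∉ (pr.2).vars) → IsDelta0 (bexs L θ) := by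
  intro L
  induction L with
  | nil => intro _; exact hθ
  | cons pr r ih =>
    obtain ⟨x, t⟩ := pr
    intro h
    exact isDelta0_bex (h (x, t) (by simp)) (ih fun pr hm => h pr (List.mem_cons_of_mem _ hm))

theorem sat_bexs {θ : Fml} : ∀ {L : List (ℕ × PTerm)} {v : ℕ → M} {w : ℕ → Set M},
    (L.map Prod.fst).Nodup →
    (∀ pr ∈ L, ∀ x ∈ L.map Prod.fst, x ∉ ((pr : ℕ × PTerm).2).vars) →
    (Sat S 𝔛 v w (bexs L θ) ↔ ∃ cs : List M, cs.length = L.length ∧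
      (∀ (i : ℕ) (hi : i < L.length), S.lt (cs.getD i S.zero) ((L[i].2).val S v)) ∧
      Sat S 𝔛 (updL v (L.map Prod.fst) cs) w θ) := by
  intro L
  induction L with
  | nil =>
    intro v w _ _
    constructor
    · intro h
      exact ⟨[], rfl, fun i hi => by simp at hi, h⟩
    · rintro ⟨cs, hlen, _, h⟩
      exact h
  | cons pr r ih =>
    obtain ⟨x, t⟩ := pr
    intro v w hnd hbt
    have hxmem : x ∈ ((x, t) :: r).map Prod.fst := by simp
    have hxt : x ∉ t.vars := hbt (x, t) (by simp) x hxmem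
    have hnd2 := List.nodup_cons.1 (show (x :: r.map Prod.fst).Nodup from hnd)
    have hxr : x ∉ r.map Prod.fst := hnd2.1
    have hndr : (r.map Prod.fst).Nodup := hnd2.2
    show Sat S 𝔛 v w (bex x t (bexs r θ)) ↔ _
    rw [sat_bex hxt]
    constructor
    · rintro ⟨c, hc, hsat⟩
      rw [ih hndr (fun pr hm y hy => hbt pr (List.mem_cons_of_mem _ hm) y
        (List.mem_cons_of_mem _ hy))] at hsat
      obtain ⟨cs, hlen, hbnd, hsat⟩ := hsat
      refine ⟨c :: cs, by simp [hlen], ?_, ?_⟩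
      · intro i hi
        cases i with
        | zero => simpa using hc
        | succ i =>
          have hi' : i < r.length := by simpa using hi
          have := hbnd i hi'
          have hval : ((r[i].2)).val S (Function.update v x c) = ((r[i].2)).val S v := by
            refine val_agree fun n hn => Function.update_of_ne (fun e : n = x => ?_) _ _
            exact hbt (r[i]) (List.mem_cons_of_mem _ (List.getElem_mem _)) x hxmem (e ▸ hn)
          simp only [List.getElem_cons_succ, List.getD_cons_succ]
          rw [← hval]
          exact this
      · show Sat S 𝔛 (updL v (x :: r.map Prod.fst) (c :: cs)) w θ
        rw [updL_cons, ← updL_update_comm hxr]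
        exact hsat
    · rintro ⟨cs, hlen, hbnd, hsat⟩
      cases cs with
      | nil => simp at hlen
      | cons c cs =>
        refine ⟨c, hbnd 0 (by simp), ?_⟩
        rw [ih hndr (fun pr hm y hy => hbt pr (List.mem_cons_of_mem _ hm) y
          (List.mem_cons_of_mem _ hy))]
        refine ⟨cs, by simpa using hlen, ?_, ?_⟩
        · intro i hi
          have := hbnd (i + 1) (by simpa using hi)
          simp only [List.getElem_cons_succ, List.getD_cons_succ] at this
          have hval : ((r[i].2)).val S (Function.update v x c) = ((r[i].2)).val S v := by
            refine val_agree fun n hn => Function.update_of_ne (fun e : n = x => ?_) _ _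
            exact hbt (r[i]) (List.mem_cons_of_mem _ (List.getElem_mem _)) x hxmem (e ▸ hn)
          rw [hval]
          exact this
        · rw [updL_update_comm hxr]
          exact hsat

/-! #### Pair existence -/

theorem rdistrib (hp : PAminusSem S) (a b c : M) :
    S.mul (S.add a b) c = S.add (S.mul a c) (S.mul b c) := by
  rw [PA.mul_comm hp, PA.distrib hp, PA.mul_comm hp c a, PA.mul_comm hp c b]

theorem dbl_add' (hp : PAminusSem S) (x y : M) :
    S.add (S.add x y) (S.add x y) = S.add (S.add x x) (S.add y y) := by
  rw [PA.add_assoc hp (S.add x y) x y, PA.add_comm hp (S.add x y) x,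
    PA.add_assoc hp x x y, ← PA.add_assoc hp (S.add x x) y y]

theorem succ_succ_dbl (hp : PAminusSem S) (q : M) :
    S.add (S.add (S.add q q) S.one) S.one = S.add (S.add q S.one) (S.add q S.one) := by
  rw [dbl_add' hp q S.one, ← PA.add_assoc hp (S.add q q) S.one S.one]

theorem sat_or {v w} {φ ψ : Fml} :
    Sat S 𝔛 v w (φ.or ψ) ↔ Sat S 𝔛 v w φ ∨ Sat S 𝔛 v w ψ := by
  show (¬ Sat S 𝔛 v w φ → Sat S 𝔛 v w ψ) ↔ _
  tauto

def eoψ : Fml :=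
  Fml.or (.eq (.var 0) (.add (.var 1) (.var 1)))
    (.eq (.var 0) (.add (.add (.var 1) (.var 1)) .one))

theorem even_odd (hR : SatRCA0 S 𝔛) {W0 : Set M} (hW0 : W0 ∈ 𝔛) (a : M) :
    ∃ q : M, a = S.add q q ∨ a = S.add (S.add q q) S.one := by
  classical
  have hp := hR.1
  set v0 : ℕ → M := fun _ => S.zero with hv0
  set w0 : ℕ → Set M := fun _ => W0 with hw0
  have hδ : IsDelta0 eoψ := .imp (.not (.eq _ _)) (.eq _ _)
  have hchar : ∀ b : M, Sat S 𝔛 (Function.update v0 0 b) w0 (Fml.ex 1 eoψ) ↔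
      ∃ q : M, b = S.add q q ∨ b = S.add (S.add q q) S.one := by
    intro b
    show (¬ ∀ c : M, ¬ Sat S 𝔛 (Function.update (Function.update v0 0 b) 1 c) w0 eoψ) ↔ _
    have h1 : ∀ c : M, Sat S 𝔛 (Function.update (Function.update v0 0 b) 1 c) w0 eoψ ↔
        (b = S.add c c ∨ b = S.add (S.add c c) S.one) := by
      intro c
      have e0 : (Function.update (Function.update v0 0 b) 1 c) 0 = b := by
        rw [Function.update_of_ne (by norm_num : (0 : ℕ) ≠ 1), Function.update_self]
      have e1 : (Function.update (Function.update v0 0 b) 1 c) 1 = c :=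
        Function.update_self _ _ _
      rw [eoψ, sat_or, sat_eq, sat_eq]
      simp only [PTerm.val, e0, e1]
    simp only [not_forall, not_not]
    exact exists_congr h1
  have hind := hR.2.1 (Fml.ex 1 eoψ) 0 ⟨1, eoψ, hδ, rfl⟩ v0 w0 (fun _ => hW0)
  refine (hchar a).1 (hind ⟨?_, ?_⟩ a)
  · exact (hchar S.zero).2 ⟨S.zero, Or.inl (PA.add_zero hp S.zero).symm⟩
  · intro b hb
    obtain ⟨q, h | h⟩ := (hchar b).1 hb
    · exact (hchar _).2 ⟨q, Or.inr (by rw [h])⟩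
    · refine (hchar _).2 ⟨S.add q S.one, Or.inl ?_⟩
      rw [h]
      exact succ_succ_dbl hp q

theorem pair_exists_aux (hp : PAminusSem S) (t a b : M)
    (key : S.mul (S.add a b) (S.add (S.add a b) S.one) = S.add t t) :
    S.PairRel (S.add t a) a b := by
  show S.mul S.two (S.add t a) = _
  rw [PA.two_mul' hp, PA.two_mul' hp, dbl_add' hp, key]

theorem pair_exists (hR : SatRCA0 S 𝔛) {W0 : Set M} (hW0 : W0 ∈ 𝔛) (a b : M) :
    ∃ p, S.PairRel p a b := by
  have hp := hR.1
  obtain ⟨q, hq | hq⟩ := even_odd hR hW0 (S.add a b)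
  · refine ⟨_, pair_exists_aux hp (S.mul q (S.add (S.add a b) S.one)) a b ?_⟩
    rw [hq]
    exact rdistrib hp q q _
  · refine ⟨_, pair_exists_aux hp (S.mul (S.add a b) (S.add q S.one)) a b ?_⟩
    have h1 : S.add (S.add a b) S.one = S.add (S.add q S.one) (S.add q S.one) := by
      rw [hq]
      exact succ_succ_dbl hp q
    rw [h1]
    exact PA.distrib hp _ _ _

theorem tupR_exists (hR : SatRCA0 S 𝔛) {W0 : Set M} (hW0 : W0 ∈ 𝔛) (as : List M) :
    ∃ p, TupR S as p := by
  induction as with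
  | nil => exact ⟨S.zero, rfl⟩
  | cons a as ih =>
    obtain ⟨q, hq⟩ := ih
    obtain ⟨p, hpair⟩ := pair_exists hR hW0 a q
    exact ⟨p, q, hpair, hq⟩

/-! #### Basic sets and the ultrafilter -/

theorem univ_mem_X (hR : SatRCA0 S 𝔛) {W0 : Set M} (hW0 : W0 ∈ 𝔛) :
    (Set.univ : Set M) ∈ 𝔛 := by
  have h := compr hR (w := fun _ => W0) (fun _ => hW0) 0 (fun _ => S.zero)
    (θ := .eq .zero .zero) (.eq _ _) (R := fun _ => True) (fun a => by
      rw [sat_eq]; simp)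
  simpa using h

theorem unb_univ (hp : PAminusSem S) : S.Unb Set.univ :=
  fun b => ⟨S.add b S.one, trivial, PA.lt_succ_self hp b⟩

theorem univ_mem_U (hR : SatRCA0 S 𝔛) {U : Set (Set M)} (hU : IsUltraOn (S.PX 𝔛) U) :
    (Set.univ : Set M) ∈ U := by
  obtain ⟨A, hA⟩ := hU.1.2.1
  have hW0 : A ∈ 𝔛 := (hU.1.1 hA).1
  exact hU.1.2.2.2.1 A hA Set.univ ⟨univ_mem_X hR hW0, unb_univ hR.1⟩ (Set.subset_univ A)

theorem not_mem_U_of_not_unb {U : Set (Set M)} (hU : IsUltraOn (S.PX 𝔛) U) {A : Set M}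
    (h : ¬ S.Unb A) : A ∉ U := fun hA => h (hU.1.1 hA).2

/-! #### Fresh variable blocks -/

def avq : ℕ → ℕ → List (ℕ × ℕ)
  | _, 0 => []
  | b, n + 1 => (b, b + 1) :: avq (b + 2) n

theorem avq_length : ∀ {n b}, (avq b n).length = n := by
  intro n
  induction n with
  | zero => intro b; rfl
  | succ n ih => intro b; show (avq (b + 2) n).length + 1 = n + 1; rw [ih]

theorem mem_flatVars_avq : ∀ {n b x}, x ∈ flatVars (avq b n) → b ≤ x ∧ x < b + 2 * n := by
  intro n
  induction n with
  | zero => intro b x hx; exact absurd hx List.not_mem_nil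
  | succ n ih =>
    intro b x hx
    have : x ∈ b :: (b + 1) :: flatVars (avq (b + 2) n) := hx
    rcases List.mem_cons.1 this with e | h1
    · omega
    · rcases List.mem_cons.1 h1 with e | h2
      · omega
      · have := ih h2
        omega

theorem nodup_flatVars_avq : ∀ {n b}, (flatVars (avq b n)).Nodup := by
  intro n
  induction n with
  | zero => intro b; exact List.nodup_nil
  | succ n ih =>
    intro b
    show (b :: (b + 1) :: flatVars (avq (b + 2) n)).Nodup
    refine List.nodup_cons.2 ⟨?_, List.nodup_cons.2 ⟨?_, ih⟩⟩
    · intro h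
      rcases List.mem_cons.1 h with e | h2
      · omega
      · have := mem_flatVars_avq h2; omega
    · intro h
      have := mem_flatVars_avq h; omega

theorem sublist_fst_flatVars : ∀ {l : List (ℕ × ℕ)}, (l.map Prod.fst).Sublist (flatVars l) := by
  intro l
  induction l with
  | nil => exact List.Sublist.refl _
  | cons aq r ih =>
    obtain ⟨a, q⟩ := aq
    exact (ih.cons q).cons₂ a

theorem nodup_fst_avq {n b} : ((avq b n).map Prod.fst).Nodup :=
  nodup_flatVars_avq.sublist sublist_fst_flatVars

theorem mem_fst_avq {n b x} (h : x ∈ (avq b n).map Prod.fst) : b ≤ x ∧ x < b + 2 * n :=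
  mem_flatVars_avq (sublist_fst_flatVars.subset h)

theorem avq_fst_getElem : ∀ {n b i} (hi : i < n),
    ((avq b n).map Prod.fst)[i]'(by rw [List.length_map, avq_length]; exact hi) = b + 2 * i := by
  intro n
  induction n with
  | zero => intro b i hi; omega
  | succ n ih =>
    intro b i hi
    cases i with
    | zero => simp [avq]
    | succ i =>
      have h1 : ((avq b (n + 1)).map Prod.fst) = b :: (avq (b + 2) n).map Prod.fst := rfl
      have h2 := ih (b := b + 2) (i := i) (by omega)
      simp only [h1, List.getElem_cons_succ]
      rw [h2]
      omega

/-! #### The decoding lemma -/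

theorem sat_decode (hp : PAminusSem S) {n N : ℕ} {θinner : Fml} {v : ℕ → M}
    {w : ℕ → Set M} {p : M} {Q : List M → Prop}
    (hθ : ∀ cs : List M, cs.length = n → TupR S cs p →
      (Sat S 𝔛 (updL (Function.update v N p) ((avq (N + 1) n).map Prod.fst) cs) w θinner ↔
        Q cs)) :
    Sat S 𝔛 (Function.update v N p) w
        (bexs ((avq (N + 1) n).map fun aq => (aq.1, PTerm.add (dblPT n (.var N)) .one))
          ((tupF N (avq (N + 1) n)).and θinner)) ↔
      ∃ cs : List M, cs.length = n ∧ TupR S cs p ∧ Q cs := by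
  classical
  set A := avq (N + 1) n with hA
  set L := A.map fun aq => (aq.1, PTerm.add (dblPT n (.var N)) .one) with hL
  have hmapfst : L.map Prod.fst = A.map Prod.fst := by
    rw [hL, List.map_map]; rfl
  have hLn : L.length = n := by rw [hL, List.length_map, hA, avq_length]
  have hndf : (L.map Prod.fst).Nodup := by rw [hmapfst, hA]; exact nodup_fst_avq
  have hbt : ∀ pr ∈ L, ∀ x ∈ L.map Prod.fst, x ∉ (pr.2 : PTerm).vars := by
    intro pr hpr x hx
    obtain ⟨aq, _, e⟩ := List.mem_map.1 hpr
    rw [← e]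
    show x ∉ (PTerm.add (dblPT n (.var N)) .one).vars
    have hxv : N + 1 ≤ x := by
      rw [hmapfst, hA] at hx
      exact (mem_fst_avq hx).1
    intro hmem
    have : x ∈ (dblPT n (PTerm.var N)).vars ∪ (PTerm.one).vars := hmem
    rw [vars_dblPT] at this
    simp [PTerm.vars] at this
    omega
  have hndtup : (N :: flatVars A).Nodup := by
    refine List.nodup_cons.2 ⟨?_, by rw [hA]; exact nodup_flatVars_avq⟩
    intro h
    rw [hA] at h
    have := mem_flatVars_avq h
    omega
  have hNnotfst : N ∉ A.map Prod.fst := by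
    intro h
    rw [hA] at h
    have := mem_fst_avq h
    omega
  have hcommon : ∀ cs : List M, cs.length = n →
      (updL (Function.update v N p) (A.map Prod.fst) cs N = p ∧
        (A.map fun aq => updL (Function.update v N p) (A.map Prod.fst) cs aq.1) = cs) := by
    intro cs hcs
    set u := updL (Function.update v N p) (A.map Prod.fst) cs with hu
    have huN : u N = p := by
      rw [hu, updL_not_mem hNnotfst, Function.update_self]
    refine ⟨huN, ?_⟩
    refine List.ext_getElem (by rw [List.length_map, hA, avq_length, hcs]) ?_
    intro i h1 h2
    have hiA : i < A.length := by rwa [List.length_map] at h1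
    have hgm : (A.map fun aq => u aq.1)[i] = u ((A.map Prod.fst)[i]'(by
        rwa [List.length_map])) := by
      rw [List.getElem_map, List.getElem_map]
    have hlen2 : cs.length = (A.map Prod.fst).length := by
      rw [List.length_map, hA, avq_length, hcs]
    have hgd := updL_getD (v := Function.update v N p) S.zero (by rw [hA]; exact nodup_fst_avq)
      hlen2 (i := i) (by rwa [List.length_map])
    rw [hgm, hu, hgd]
    exact List.getD_eq_getElem _ _ h2
  rw [sat_bexs hndf hbt]
  constructor
  · rintro ⟨cs, hlen, _, hsat⟩
    have hcs : cs.length = n := by rw [hlen, hLn]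
    rw [sat_and] at hsat
    obtain ⟨htupsat, hinner⟩ := hsat
    rw [hmapfst] at htupsat hinner
    rw [sat_tupF hp hndtup] at htupsat
    obtain ⟨huN, hlist⟩ := hcommon cs hcs
    rw [huN, hlist] at htupsat
    exact ⟨cs, hcs, htupsat, (hθ cs hcs htupsat).1 hinner⟩
  · rintro ⟨cs, hcs, htup, hQ⟩
    refine ⟨cs, by rw [hcs, hLn], ?_, ?_⟩
    · intro i hi
      have hiL : (L[i].2) = PTerm.add (dblPT n (.var N)) .one := by
        simp [hL]
      rw [hiL]
      have hval : (PTerm.add (dblPT n (.var N)) .one).val S (Function.update v N p) =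
          S.add (dblM S n p) S.one := by
        show S.add ((dblPT n (.var N)).val S _) S.one = _
        rw [val_dblPT]
        have : (PTerm.var N).val S (Function.update v N p) = p := Function.update_self _ _ _
        rw [this]
      rw [hval]
      have hin : i < cs.length := by rw [hcs]; rwa [hLn] at hi
      rw [List.getD_eq_getElem _ _ hin]
      refine (PA.lt_succ_iff_le hp).2 ?_
      have := tupR_le hp htup (cs[i]) (List.getElem_mem _)
      rwa [hcs] at this
    · rw [sat_and, hmapfst]
      obtain ⟨huN, hlist⟩ := hcommon cs hcs
      constructor
      · rw [sat_tupF hp hndtup, huN, hlist]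
        exact htup
      · exact (hθ cs hcs htup).2 hQ

/-! #### The master family of coded sets -/

def TSet (S : AStr M) (𝔛 : Set (Set M)) (φ : Fml) (xs : List ℕ) (v : ℕ → M)
    (w : ℕ → Set M) : Set M :=
  {p | ∃ as : List M, as.length = xs.length ∧ TupR S as p ∧ Sat S 𝔛 (updL v xs as) w φ}

def IsAtom : Fml → Prop
  | .eq _ _ => True
  | .lt _ _ => True
  | .mem _ _ => True
  | _ => False

def renF (σ : ℕ → ℕ) : Fml → Fml
  | .eq t u => .eq (renT σ t) (renT σ u)
  | .lt t u => .lt (renT σ t) (renT σ u)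
  | .mem t k => .mem (renT σ t) k
  | φ => φ

theorem sat_renF {σ : ℕ → ℕ} {v w} : ∀ {α : Fml}, IsAtom α →
    (Sat S 𝔛 v w (renF σ α) ↔ Sat S 𝔛 (fun m => v (σ m)) w α) := by
  intro α h
  cases α with
  | eq t u =>
    show Sat S 𝔛 v w (.eq (renT σ t) (renT σ u)) ↔ _
    rw [sat_eq, sat_eq, val_renT, val_renT]
  | lt t u =>
    show Sat S 𝔛 v w (.lt (renT σ t) (renT σ u)) ↔ _
    rw [sat_lt, sat_lt, val_renT, val_renT]
  | mem t k =>
    show Sat S 𝔛 v w (.mem (renT σ t) k) ↔ _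
    rw [sat_mem, sat_mem, val_renT]
  | not φ => exact h.elim
  | imp φ ψ => exact h.elim
  | all x φ => exact h.elim
  | allS k φ => exact h.elim

theorem isDelta0_renF {σ : ℕ → ℕ} : ∀ {α : Fml}, IsAtom α → IsDelta0 (renF σ α) := by
  intro α h
  cases α with
  | eq t u => exact .eq _ _
  | lt t u => exact .lt _ _
  | mem t k => exact .mem _ _
  | not φ => exact h.elim
  | imp φ ψ => exact h.elim
  | all x φ => exact h.elim
  | allS k φ => exact h.elim

theorem nodup_N_flatVars {n N : ℕ} : (N :: flatVars (avq (N + 1) n)).Nodup := by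
  refine List.nodup_cons.2 ⟨?_, nodup_flatVars_avq⟩
  intro h
  have := mem_flatVars_avq h
  omega

theorem isDelta0_decodeFml {n N : ℕ} {θinner : Fml} (hθ : IsDelta0 θinner) :
    IsDelta0 (bexs ((avq (N + 1) n).map fun aq => (aq.1, PTerm.add (dblPT n (.var N)) .one))
      ((tupF N (avq (N + 1) n)).and θinner)) := by
  refine isDelta0_bexs (isDelta0_and (isDelta0_tupF nodup_N_flatVars) hθ) ?_
  intro pr hpr
  obtain ⟨aq, haq, e⟩ := List.mem_map.1 hpr
  rw [← e]
  show aq.1 ∉ (PTerm.add (dblPT n (.var N)) .one).vars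
  intro hmem
  have h1 : aq.1 ∈ (dblPT n (PTerm.var N)).vars ∪ (PTerm.one).vars := hmem
  rw [vars_dblPT] at h1
  simp [PTerm.vars] at h1
  have h2 : aq.1 ∈ (avq (N + 1) n).map Prod.fst := List.mem_map.2 ⟨aq, haq, rfl⟩
  have := mem_fst_avq h2
  omega

/-! #### Atomic case -/

theorem TSet_atom (hR : SatRCA0 S 𝔛) {α : Fml} (hat : IsAtom α) (xs : List ℕ)
    (v : ℕ → M) (w : ℕ → Set M) (hw : ∀ k, w k ∈ 𝔛) : TSet S 𝔛 α xs v w ∈ 𝔛 := by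
  classical
  have hp := hR.1
  set n := xs.length with hn
  set N := α.freeN.sup id + 1 with hN
  set σ : ℕ → ℕ := fun m => if m ∈ xs then N + 1 + 2 * xs.idxOf m else m with hσ
  have hchar : ∀ p : M, Sat S 𝔛 (Function.update v N p) w
      (bexs ((avq (N + 1) n).map fun aq => (aq.1, PTerm.add (dblPT n (.var N)) .one))
        ((tupF N (avq (N + 1) n)).and (renF σ α))) ↔ p ∈ TSet S 𝔛 α xs v w := by
    intro p
    rw [sat_decode hp (Q := fun cs => Sat S 𝔛 (updL v xs cs) w α) ?_]
    · exact Iff.rfl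
    · intro cs hcs htup
      rw [sat_renF hat]
      refine sat_agree fun m hm => ?_
      have hmN : m < N := by
        have h1 : id m ≤ α.freeN.sup id := Finset.le_sup hm
        simp only [id] at h1
        omega
      by_cases hmx : m ∈ xs
      · have hσm : σ m = N + 1 + 2 * xs.idxOf m := by rw [hσ]; simp [hmx]
        have hidx : xs.idxOf m < n := by
          rw [hn]
          exact List.idxOf_lt_length_iff.2 hmx
        have hfst := avq_fst_getElem (b := N + 1) hidx
        have hlen2 : cs.length = ((avq (N + 1) n).map Prod.fst).length := by
          rw [List.length_map, avq_length, hcs]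
        have hLHS := updL_getD (v := Function.update v N p) S.zero
          (nodup_fst_avq (n := n) (b := N + 1)) hlen2 (i := xs.idxOf m)
          (by rw [List.length_map, avq_length]; exact hidx)
        have hRHS := updL_indexOf (v := v) S.zero
          (show cs.length = xs.length by rw [hcs, hn]) hmx
        show updL (Function.update v N p) ((avq (N + 1) n).map Prod.fst) cs (σ m) =
          updL v xs cs m
        rw [hσm, ← hfst, hLHS, hRHS]
      · have hσm : σ m = m := by rw [hσ]; simp [hmx]
        show updL (Function.update v N p) ((avq (N + 1) n).map Prod.fst) cs (σ m) =
          updL v xs cs m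
        rw [hσm, updL_not_mem (fun h => by have := mem_fst_avq h; omega),
          Function.update_of_ne (show m ≠ N by omega), updL_not_mem hmx]
  have h := compr hR hw N v (isDelta0_decodeFml (isDelta0_renF hat))
    (R := fun p => p ∈ TSet S 𝔛 α xs v w) hchar
  rwa [Set.setOf_mem_eq] at h

/-! #### Negation and implication cases -/

theorem TSet_not (hR : SatRCA0 S 𝔛) {φ : Fml} {xs : List ℕ} {v : ℕ → M} {w : ℕ → Set M}
    (hB : TSet S 𝔛 φ xs v w ∈ 𝔛) : TSet S 𝔛 (.not φ) xs v w ∈ 𝔛 := by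
  classical
  have hp := hR.1
  set n := xs.length with hn
  set w' : ℕ → Set M := fun _ => TSet S 𝔛 φ xs v w with hw'
  set v0 : ℕ → M := fun _ => S.zero with hv0
  have hchar : ∀ p : M, Sat S 𝔛 (Function.update v0 0 p) w'
      (bexs ((avq 1 n).map fun aq => (aq.1, PTerm.add (dblPT n (.var 0)) .one))
        ((tupF 0 (avq 1 n)).and (.not (.mem (.var 0) 0)))) ↔
        p ∈ TSet S 𝔛 (.not φ) xs v w := by
    intro p
    rw [sat_decode hp (N := 0) (Q := fun _ => p ∉ TSet S 𝔛 φ xs v w) ?_]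
    · constructor
      · rintro ⟨cs, hcs, htup, hnot⟩
        exact ⟨cs, hcs, htup, fun hsat => hnot ⟨cs, hcs, htup, hsat⟩⟩
      · rintro ⟨as, hlen, htup, hnsat⟩
        refine ⟨as, hlen, htup, ?_⟩
        rintro ⟨as', hlen', htup', hsat'⟩
        rw [tupR_inj hp htup' htup (by rw [hlen', hlen])] at hsat'
        exact hnsat hsat'
    · intro cs hcs htup
      rw [sat_not, sat_mem]
      have hu0 : updL (Function.update v0 0 p) ((avq 1 n).map Prod.fst) cs 0 = p := by
        rw [updL_not_mem (fun h => by have := mem_fst_avq h; omega), Function.update_self]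
      have hval : (PTerm.var 0).val S
          (updL (Function.update v0 0 p) ((avq 1 n).map Prod.fst) cs) = p := hu0
      rw [hval, hw']
  have h := compr hR (fun _ => hB) 0 v0
    (isDelta0_decodeFml (.not (.mem _ _)))
    (R := fun p => p ∈ TSet S 𝔛 (.not φ) xs v w) hchar
  rwa [Set.setOf_mem_eq] at h

theorem TSet_imp (hR : SatRCA0 S 𝔛) {φ ψ : Fml} {xs : List ℕ} {v : ℕ → M} {w : ℕ → Set M}
    (hBφ : TSet S 𝔛 φ xs v w ∈ 𝔛) (hBψ : TSet S 𝔛 ψ xs v w ∈ 𝔛) :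
    TSet S 𝔛 (.imp φ ψ) xs v w ∈ 𝔛 := by
  classical
  have hp := hR.1
  set n := xs.length with hn
  set w' : ℕ → Set M := fun k => if k = 0 then TSet S 𝔛 φ xs v w else TSet S 𝔛 ψ xs v w
    with hw'
  set v0 : ℕ → M := fun _ => S.zero with hv0
  have hw'mem : ∀ k, w' k ∈ 𝔛 := by
    intro k
    rw [hw']
    by_cases hk : k = 0 <;> simp [hk, hBφ, hBψ]
  have hchar : ∀ p : M, Sat S 𝔛 (Function.update v0 0 p) w'
      (bexs ((avq 1 n).map fun aq => (aq.1, PTerm.add (dblPT n (.var 0)) .one))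
        ((tupF 0 (avq 1 n)).and (.imp (.mem (.var 0) 0) (.mem (.var 0) 1)))) ↔
        p ∈ TSet S 𝔛 (.imp φ ψ) xs v w := by
    intro p
    rw [sat_decode hp (N := 0)
      (Q := fun _ => p ∈ TSet S 𝔛 φ xs v w → p ∈ TSet S 𝔛 ψ xs v w) ?_]
    · constructor
      · rintro ⟨cs, hcs, htup, himp⟩
        refine ⟨cs, hcs, htup, ?_⟩
        intro hsatφ
        obtain ⟨as', hlen', htup', hsatψ⟩ := himp ⟨cs, hcs, htup, hsatφ⟩
        rwa [tupR_inj hp htup' htup (by rw [hlen', hcs])] at hsatψ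
      · rintro ⟨as, hlen, htup, himp⟩
        refine ⟨as, hlen, htup, ?_⟩
        rintro ⟨as₂, hlen₂, htup₂, hsatφ⟩
        rw [tupR_inj hp htup₂ htup (by rw [hlen₂, hlen])] at hsatφ
        exact ⟨as, hlen, htup, himp hsatφ⟩
    · intro cs hcs htup
      rw [sat_imp, sat_mem, sat_mem]
      have hu0 : updL (Function.update v0 0 p) ((avq 1 n).map Prod.fst) cs 0 = p := by
        rw [updL_not_mem (fun h => by have := mem_fst_avq h; omega), Function.update_self]
      have hval : (PTerm.var 0).val S
          (updL (Function.update v0 0 p) ((avq 1 n).map Prod.fst) cs) = p := hu0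
      rw [hval, hw']
      simp
  have h := compr hR hw'mem 0 v0
    (isDelta0_decodeFml (.imp (.mem _ _) (.mem _ _)))
    (R := fun p => p ∈ TSet S 𝔛 (.imp φ ψ) xs v w) hchar
  rwa [Set.setOf_mem_eq] at h

/-! #### Universal quantifier case (the ultrafilter argument) -/

theorem TSet_all (hR : SatRCA0 S 𝔛) {U : Set (Set M)} (hU : IsUltraOn (S.PX 𝔛) U)
    (hDef : S.DefinableFam 𝔛 U) {φ : Fml} {z : ℕ} {xs : List ℕ} {v : ℕ → M}
    {w : ℕ → Set M} (hB : TSet S 𝔛 φ (z :: xs) v w ∈ 𝔛) :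
    TSet S 𝔛 (.all z φ) xs v w ∈ 𝔛 := by
  classical
  have hp := hR.1
  set B' := TSet S 𝔛 φ (z :: xs) v w with hB'def
  set pbT : PTerm := .add (.add (.mul (.add (.var 3) (.var 1))
      (.add (.add (.var 3) (.var 1)) .one)) (.mul two' (.var 3))) .one with hpbT
  set ΘD : Fml := bex 1 (tb2 0) (bex 2 (tb2 0) ((pairFml (.var 0) (.var 1) (.var 2)).and
      (ball 3 (.var 2) (bex 4 pbT ((pairFml (.var 4) (.var 3) (.var 1)).and
        (.mem (.var 4) 0)))))) with hΘD
  have h1v : (1 : ℕ) ∉ (tb2 0).vars := by rw [vars_tb2]; simp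
  have h2v : (2 : ℕ) ∉ (tb2 0).vars := by rw [vars_tb2]; simp
  have h3v : (3 : ℕ) ∉ (PTerm.var 2).vars := by simp [PTerm.vars]
  have h4v : (4 : ℕ) ∉ pbT.vars := by rw [hpbT]; simp [PTerm.vars, two']
  have hδ : IsDelta0 ΘD := by
    rw [hΘD]
    exact isDelta0_bex h1v (isDelta0_bex h2v (isDelta0_and isDelta0_pairFml
      (isDelta0_ball h3v (isDelta0_bex h4v (isDelta0_and isDelta0_pairFml (.mem _ _))))))
  have hchar : ∀ r : M, Sat S 𝔛 (Function.update (fun _ => S.zero) 0 r) (fun _ => B') ΘD ↔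
      (∃ p m : M, S.PairRel r p m ∧ ∀ c, S.lt c m →
        ∃ p', S.PairRel p' c p ∧ p' ∈ B') := by
    intro r
    rw [hΘD, sat_bex h1v]
    constructor
    · rintro ⟨p, _, h2⟩
      rw [sat_bex h2v] at h2
      obtain ⟨m, _, h3⟩ := h2
      rw [sat_and] at h3
      obtain ⟨hpair, hball⟩ := h3
      rw [sat_ball h3v] at hball
      refine ⟨p, m, hpair, ?_⟩
      intro c hc
      have h4 := hball c hc
      rw [sat_bex h4v] at h4
      obtain ⟨p', _, h5⟩ := h4
      rw [sat_and] at h5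
      exact ⟨p', h5.1, h5.2⟩
    · rintro ⟨p, m, hpair, hcond⟩
      refine ⟨p, ?_, ?_⟩
      · show S.lt p (S.add (S.add r r) S.one)
        exact (PA.lt_succ_iff_le hp).2
          (PA.le_trans' hp (PA.pair_bound1 hp hpair) (PA.le_add_right hp r r))
      · rw [sat_bex h2v]
        refine ⟨m, ?_, ?_⟩
        · show S.lt m (S.add (S.add r r) S.one)
          exact (PA.lt_succ_iff_le hp).2 (PA.pair_bound2 hp hpair)
        · rw [sat_and]
          refine ⟨hpair, ?_⟩
          rw [sat_ball h3v]
          intro c hc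
          obtain ⟨p', hp'pair, hp'B⟩ := hcond c hc
          rw [sat_bex h4v]
          refine ⟨p', ?_, ?_⟩
          · show S.lt p' (S.add (S.add (S.mul (S.add c p) (S.add (S.add c p) S.one))
              (S.mul S.two c)) S.one)
            exact (PA.lt_succ_iff_le hp).2 (PA.pair_self_le hp hp'pair)
          · rw [sat_and]
            exact ⟨hp'pair, hp'B⟩
  have hD : {r : M | ∃ p m : M, S.PairRel r p m ∧ ∀ c, S.lt c m →
      ∃ p', S.PairRel p' c p ∧ p' ∈ B'} ∈ 𝔛 :=
    compr hR (fun _ => hB) 0 (fun _ => S.zero) hδ hchar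
  set D := {r : M | ∃ p m : M, S.PairRel r p m ∧ ∀ c, S.lt c m →
      ∃ p', S.PairRel p' c p ∧ p' ∈ B'} with hDdef
  have hslice := hDef D hD
  have hfinal : TSet S 𝔛 (.all z φ) xs v w = {a : M | S.SliceAt D a ∈ U} := by
    ext p
    constructor
    · rintro ⟨as, hlen, htup, hsat⟩
      show S.SliceAt D p ∈ U
      have huniv : S.SliceAt D p = Set.univ := by
        ext m
        simp only [Set.mem_univ, iff_true]
        obtain ⟨r, hr⟩ := pair_exists hR hB p m
        refine ⟨r, hr, ⟨p, m, hr, ?_⟩⟩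
        intro c _
        obtain ⟨p', hp'⟩ := pair_exists hR hB c p
        exact ⟨p', hp', ⟨c :: as, by simp [hlen], ⟨p, hp', htup⟩, hsat c⟩⟩
      rw [huniv]
      exact univ_mem_U hR hU
    · intro hmem
      have hvalid : ∃ as : List M, as.length = xs.length ∧ TupR S as p := by
        by_contra hnv
        push_neg at hnv
        refine not_mem_U_of_not_unb hU (fun hunb => ?_) hmem
        obtain ⟨a, ha, hlt0⟩ := hunb S.zero
        obtain ⟨r, hrpair, hrD⟩ := ha
        obtain ⟨p₁, m₁, hpair₁, hcond⟩ := hrD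
        obtain ⟨ep, em⟩ := PA.pair_inj hp hrpair hpair₁
        obtain ⟨p', hp'pair, hp'B⟩ := hcond S.zero (by rw [← em]; exact hlt0)
        obtain ⟨as₂, hlen₂, htup₂, _⟩ := hp'B
        cases as₂ with
        | nil => simp at hlen₂
        | cons c' as₃ =>
          obtain ⟨q, hqpair, htup₃⟩ := htup₂
          obtain ⟨_, eq2⟩ := PA.pair_inj hp hqpair hp'pair
          refine hnv as₃ (by simpa using hlen₂) ?_
          rw [eq2, ← ep] at htup₃
          exact htup₃
      obtain ⟨as, hlen, htup⟩ := hvalid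
      refine ⟨as, hlen, htup, ?_⟩
      intro c
      by_contra hc0
      refine not_mem_U_of_not_unb hU (fun hunb => ?_) hmem
      obtain ⟨m, hmsl, hltcm⟩ := hunb c
      obtain ⟨r, hrpair, hrD⟩ := hmsl
      obtain ⟨p₁, m₁, hpair₁, hcond⟩ := hrD
      obtain ⟨ep, em⟩ := PA.pair_inj hp hrpair hpair₁
      obtain ⟨p', hp'pair, hp'B⟩ := hcond c (by rw [← em]; exact hltcm)
      obtain ⟨as₂, hlen₂, htup₂, hsat₂⟩ := hp'B
      cases as₂ with
      | nil => simp at hlen₂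
      | cons c' as₃ =>
        obtain ⟨q, hqpair, htup₃⟩ := htup₂
        obtain ⟨ec, eq2⟩ := PA.pair_inj hp hqpair hp'pair
        have has : as₃ = as := by
          refine tupR_inj hp ?_ htup (by rw [hlen]; simpa using hlen₂)
          rw [eq2, ← ep] at htup₃
          exact htup₃
        rw [ec, has] at hsat₂
        exact hc0 hsat₂
  rw [hfinal]
  exact hslice

/-! #### Master induction and final assembly -/

theorem TSet_mem (hR : SatRCA0 S 𝔛) {U : Set (Set M)} (hU : IsUltraOn (S.PX 𝔛) U)
    (hDef : S.DefinableFam 𝔛 U) : ∀ {φ : Fml}, φ.IsArith → ∀ (xs : List ℕ) (v : ℕ → M)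
      (w : ℕ → Set M), (∀ k, w k ∈ 𝔛) → TSet S 𝔛 φ xs v w ∈ 𝔛 := by
  intro φ
  induction φ with
  | eq t u => intro _ xs v w hw; exact TSet_atom (α := .eq t u) hR trivial xs v w hw
  | lt t u => intro _ xs v w hw; exact TSet_atom (α := .lt t u) hR trivial xs v w hw
  | mem t k => intro _ xs v w hw; exact TSet_atom (α := .mem t k) hR trivial xs v w hw
  | not φ ih => intro h xs v w hw; exact TSet_not hR (ih h xs v w hw)
  | imp φ ψ ihφ ihψ =>
    intro h xs v w hw
    exact TSet_imp hR (ihφ h.1 xs v w hw) (ihψ h.2 xs v w hw)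
  | all z φ ih =>
    intro h xs v w hw
    exact TSet_all hR hU hDef (ih h (z :: xs) v w hw)
  | allS k φ ih => intro h; exact h.elim

theorem set_induction (hR : SatRCA0 S 𝔛) {X : Set M} (hX : X ∈ 𝔛) (h0 : S.zero ∈ X)
    (hsucc : ∀ a, a ∈ X → S.add a S.one ∈ X) : ∀ a : M, a ∈ X := by
  classical
  have hind := hR.2.1 (Fml.ex 1 (.mem (.var 0) 0)) 0 ⟨1, .mem (.var 0) 0, .mem _ _, rfl⟩
    (fun _ => S.zero) (fun _ => X) (fun _ => hX)
  have hchar : ∀ b : M, Sat S 𝔛 (Function.update (fun _ => S.zero) 0 b) (fun _ => X)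
      (Fml.ex 1 (.mem (.var 0) 0)) ↔ b ∈ X := by
    intro b
    show (¬ ∀ c : M, ¬ Sat S 𝔛
      (Function.update (Function.update (fun _ => S.zero) 0 b) 1 c) (fun _ => X)
      (.mem (.var 0) 0)) ↔ _
    simp only [not_forall, not_not]
    constructor
    · rintro ⟨c, hc⟩
      exact hc
    · intro hb
      exact ⟨S.zero, hb⟩
  intro a
  refine (hchar a).1 (hind ⟨(hchar S.zero).2 h0, ?_⟩ a)
  intro b hb
  exact (hchar _).2 (hsucc b ((hchar b).1 hb))

theorem aca_compr (hRCA : SatRCA0 S 𝔛) {U : Set (Set M)} (hUltra : IsUltraOn (S.PX 𝔛) U)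
    (hDef : S.DefinableFam 𝔛 U) {φ : Fml} (hφ : φ.IsArith) (x : ℕ) (v : ℕ → M)
    (w : ℕ → Set M) (hw : ∀ k, w k ∈ 𝔛) :
    {a : M | Sat S 𝔛 (Function.update v x a) w φ} ∈ 𝔛 := by
  classical
  have hp := hRCA.1
  have hB := TSet_mem hRCA hUltra hDef hφ [x] v w hw
  set B := TSet S 𝔛 φ [x] v w with hBdef
  set bndT : PTerm := .add (.add (.mul (.add (.var 0) .zero)
      (.add (.add (.var 0) .zero) .one)) (.mul two' (.var 0))) .one with hbndT
  set θ : Fml := bex 1 bndT ((pairFml (.var 1) (.var 0) .zero).and (.mem (.var 1) 0))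
    with hθdef
  have h1b : (1 : ℕ) ∉ bndT.vars := by rw [hbndT]; simp [PTerm.vars, two']
  have hδ : IsDelta0 θ := by
    rw [hθdef]
    exact isDelta0_bex h1b (isDelta0_and isDelta0_pairFml (.mem _ _))
  have hchar : ∀ a : M, Sat S 𝔛 (Function.update (fun _ => S.zero) 0 a) (fun _ => B) θ ↔
      Sat S 𝔛 (Function.update v x a) w φ := by
    intro a
    rw [hθdef, sat_bex h1b]
    constructor
    · rintro ⟨p, _, hsat⟩
      rw [sat_and] at hsat
      obtain ⟨hpair, hmem⟩ := hsat
      have hmem' : p ∈ B := hmem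
      rw [hBdef] at hmem'
      obtain ⟨as, hlen, htup, hsat'⟩ := hmem'
      cases as with
      | nil => simp at hlen
      | cons a' as' =>
        cases as' with
        | cons b bs => simp at hlen
        | nil =>
          obtain ⟨q, hq, hq0⟩ := htup
          rw [show (TupR S [] q) = (q = S.zero) from rfl] at hq0
          rw [hq0] at hq
          have he := PA.pair_inj hp hq hpair
          rw [he.1] at hsat'
          exact hsat'
    · intro hsat
      obtain ⟨p, hpair⟩ := pair_exists hRCA hB a S.zero
      refine ⟨p, ?_, ?_⟩
      · show S.lt p (S.add (S.add (S.mul (S.add a S.zero)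
          (S.add (S.add a S.zero) S.one)) (S.mul S.two a)) S.one)
        exact (PA.lt_succ_iff_le hp).2 (PA.pair_self_le hp hpair)
      · rw [sat_and]
        have hpB : p ∈ B := by
          rw [hBdef]
          exact ⟨[a], rfl, ⟨S.zero, hpair, rfl⟩, hsat⟩
        exact ⟨hpair, hpB⟩
  exact compr hRCA (fun _ => hB) 0 (fun _ => S.zero) hδ hchar

end Stmt5

/-- Lemma 6 of the paper, Kirby. If `(M,𝔛) ⊨ RCA₀` and there is a
definable ultrafilter on `P_𝔛`, then `(M,𝔛) ⊨ ACA₀`. -/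
theorem definable_ultrafilter_gives_ACA
    {M : Type} (S : AStr M) (𝔛 U : Set (Set M))
    (hRCA : SatRCA0 S 𝔛)
    (hUltra : IsUltraOn (S.PX 𝔛) U)
    (hDef : S.DefinableFam 𝔛 U) :
    SatACA0 S 𝔛 := by
  refine ⟨hRCA.1, ?_, ?_⟩
  · intro X hX h0 hsucc
    exact Stmt5.set_induction hRCA hX h0 hsucc
  · intro φ x hφ v w hw
    exact Stmt5.aca_compr hRCA hUltra hDef hφ x v w hw

end Paper
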